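/- arXiv:2407.08490 — 3 statements merged into one kernel-verified Lean document; each statement's English description precedes it below -/
import Mathlib

section
/- For every k ≥ 1 there exists K ≥ 1 with the following property. Every strictly increasing homeomorphism φ : ℝ → ℝ which is k-quasi-symmetric admits an extension to ℍ: there exists an orientation-preserving C¹ diffeomorphism F : ℍ → ℍ which is K-quasi-conformal, such that for every x ∈ ℝ, F(z) → φ(x) as z → x with z ∈ ℍ, and |F(z)| → ∞ as |z| → ∞ with z ∈ ℍ. -/
open Complex Set Filter Topology

noncomputable section

/-- The upper half-plane, as a subset of `ℂ`. -/
def UpperHalf : Set ℂ := {z : ℂ | 0 < z.im}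

/-- Inverse hyperbolic cosine. -/
noncomputable def arcosh (x : ℝ) : ℝ := Real.log (x + Real.sqrt (x ^ 2 - 1))

/-- The hyperbolic distance on the upper half-plane,
`d(z,w) = arcosh (1 + |z-w|² / (2 Im z Im w))`. -/
noncomputable def hypDist (z w : ℂ) : ℝ :=
  arcosh (1 + (‖z - w‖) ^ 2 / (2 * z.im * w.im))

/-- The Wirtinger derivative `∂f/∂z = ½(∂f/∂x − i ∂f/∂y)` of `f` on the upper half-plane. -/
noncomputable def wirtZ (f : ℂ → ℂ) (z : ℂ) : ℂ :=
  (1 / 2 : ℂ) * (fderivWithin ℝ f UpperHalf z 1 - Complex.I * fderivWithin ℝ f UpperHalf z Complex.I)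

/-- The Wirtinger derivative `∂f/∂z̄ = ½(∂f/∂x + i ∂f/∂y)` of `f` on the upper half-plane. -/
noncomputable def wirtZbar (f : ℂ → ℂ) (z : ℂ) : ℂ :=
  (1 / 2 : ℂ) * (fderivWithin ℝ f UpperHalf z 1 + Complex.I * fderivWithin ℝ f UpperHalf z Complex.I)

/-- `f` is an orientation-preserving `C¹` diffeomorphism of the upper half-plane onto itself
which is `K`-quasi-conformal: `|∂f/∂z̄| ≤ ((K-1)/(K+1)) |∂f/∂z|`.  Orientation preservation is
expressed by positivity of the Jacobian determinant `|∂f/∂z|² − |∂f/∂z̄|² > 0`. -/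
def IsQCDiffeo (K : ℝ) (f : ℂ → ℂ) : Prop :=
  MapsTo f UpperHalf UpperHalf ∧ InjOn f UpperHalf ∧ SurjOn f UpperHalf UpperHalf ∧
  ContDiffOn ℝ 1 f UpperHalf ∧
  (∀ z ∈ UpperHalf, ‖wirtZbar f z‖ < ‖wirtZ f z‖) ∧
  (∀ z ∈ UpperHalf, ‖wirtZbar f z‖ ≤ ((K - 1) / (K + 1)) * ‖wirtZ f z‖)

/-- `φ : ℝ → ℝ` is a strictly increasing homeomorphism of the real line. -/
def IncrHomeo (φ : ℝ → ℝ) : Prop :=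
  StrictMono φ ∧ Continuous φ ∧ Function.Surjective φ

/-- `φ` is `k`-quasi-symmetric. -/
def QuasiSym (k : ℝ) (φ : ℝ → ℝ) : Prop :=
  ∀ x t : ℝ, 0 < t →
    1 / k ≤ (φ (x + t) - φ x) / (φ x - φ (x - t)) ∧
      (φ (x + t) - φ x) / (φ x - φ (x - t)) ≤ k

/-- `|f z| → ∞` as `|z| → ∞` with `z` in the upper half-plane. -/
def TendsInfty (f : ℂ → ℂ) : Prop :=
  ∀ R : ℝ, 0 < R → ∃ S : ℝ, 0 < S ∧ ∀ z ∈ UpperHalf, S ≤ ‖z‖ → R ≤ ‖f z‖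

/-- The cross-ratio of four real numbers. -/
noncomputable def crossRatio (a b c d : ℝ) : ℝ := ((c - a) * (d - b)) / ((b - a) * (d - c))

/-- The Möbius action of `SL(2,ℝ)` on the (complexified) upper half-plane. -/
noncomputable def moebius (g : Matrix.SpecialLinearGroup (Fin 2) ℝ) (z : ℂ) : ℂ :=
  (((g : Matrix (Fin 2) (Fin 2) ℝ) 0 0 : ℂ) * z + ((g : Matrix (Fin 2) (Fin 2) ℝ) 0 1 : ℂ)) /
  (((g : Matrix (Fin 2) (Fin 2) ℝ) 1 0 : ℂ) * z + ((g : Matrix (Fin 2) (Fin 2) ℝ) 1 1 : ℂ))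

/-- The derivatives of order `p` of `u` are bounded by `M` with respect to the hyperbolic
metric: `(Im z)^p ‖Dᵖu(z)‖ ≤ M` on the upper half-plane. -/
def DerivBound (u : ℂ → ℝ) (p : ℕ) (M : ℝ) : Prop :=
  ∀ z ∈ UpperHalf, (z.im) ^ p * ‖iteratedFDerivWithin ℝ p u UpperHalf z‖ ≤ M

/-- The Euclidean Laplacian `Δu = ∂²u/∂x² + ∂²u/∂y²` of `u` on the upper half-plane. -/
noncomputable def lapl (u : ℂ → ℝ) (z : ℂ) : ℝ :=
  iteratedFDerivWithin ℝ 2 u UpperHalf z ![1, 1] +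
    iteratedFDerivWithin ℝ 2 u UpperHalf z ![Complex.I, Complex.I]

/-- The curvature function `K_u(z) = −e^{−2u(z)} (1 + (Im z)² Δu(z))` of the conformal
metric `e^{2u} h_{−1}` on the upper half-plane. -/
noncomputable def curv (u : ℂ → ℝ) (z : ℂ) : ℝ :=
  -Real.exp (-2 * u z) * (1 + z.im ^ 2 * lapl u z)

/-- Convergence together with all derivatives, uniformly on every compact subset of the
upper half-plane. -/
def ConvAllDerivs (F : ℕ → ℂ → ℝ) (G : ℂ → ℝ) : Prop :=
  ∀ p : ℕ, ∀ S : Set ℂ, S ⊆ UpperHalf → IsCompact S →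
    TendstoUniformlyOn (fun n z => iteratedFDerivWithin ℝ p (F n) UpperHalf z)
      (fun z => iteratedFDerivWithin ℝ p G UpperHalf z) atTop S

namespace BA

variable {φ : ℝ → ℝ}

/-- antiderivative of φ -/
def G (φ : ℝ → ℝ) (x : ℝ) : ℝ := ∫ t in (0:ℝ)..x, φ t

lemma hasDerivG (hc : Continuous φ) (x : ℝ) : HasDerivAt (G φ) (φ x) x :=
  intervalIntegral.integral_hasDerivAt_right (hc.intervalIntegrable _ _)
    (hc.stronglyMeasurableAtFilter _ _) hc.continuousAt

lemma G_sub (hc : Continuous φ) (s t : ℝ) : G φ t - G φ s = ∫ u in s..t, φ u :=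
  intervalIntegral.integral_interval_sub_left (hc.intervalIntegrable _ _)
    (hc.intervalIntegrable _ _)

/-- average of φ on [s,t] -/
def avg (φ : ℝ → ℝ) (s t : ℝ) : ℝ := (G φ t - G φ s) / (t - s)

lemma integral_le_of_le (hc : Continuous φ) (hm : Monotone φ) {s t : ℝ} (h : s ≤ t) :
    ∫ u in s..t, φ u ≤ (t - s) * φ t := by
  have := intervalIntegral.integral_mono_on (μ := MeasureTheory.volume) h
    (hc.intervalIntegrable _ _) (intervalIntegrable_const (c := φ t))
    (fun u hu => hm hu.2)
  simpa [smul_eq_mul, mul_comm] using this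

lemma le_integral_of_le (hc : Continuous φ) (hm : Monotone φ) {s t : ℝ} (h : s ≤ t) :
    (t - s) * φ s ≤ ∫ u in s..t, φ u := by
  have := intervalIntegral.integral_mono_on (μ := MeasureTheory.volume) h
    (intervalIntegrable_const (c := φ s)) (hc.intervalIntegrable _ _)
    (fun u hu => hm hu.1)
  simpa [smul_eq_mul, mul_comm] using this

lemma integral_split (hc : Continuous φ) (s m t : ℝ) :
    ∫ u in s..t, φ u = (∫ u in s..m, φ u) + ∫ u in m..t, φ u :=
  (intervalIntegral.integral_add_adjacent_intervals (hc.intervalIntegrable _ _)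
    (hc.intervalIntegrable _ _)).symm

lemma avg_le (hc : Continuous φ) (hm : Monotone φ) {s t : ℝ} (h : s < t) :
    avg φ s t ≤ φ t := by
  rw [avg, div_le_iff₀ (by linarith), G_sub hc]
  have := integral_le_of_le hc hm h.le
  linarith

lemma le_avg (hc : Continuous φ) (hm : Monotone φ) {s t : ℝ} (h : s < t) :
    φ s ≤ avg φ s t := by
  rw [avg, le_div_iff₀ (by linarith), G_sub hc]
  have := le_integral_of_le hc hm h.le
  linarith

lemma avg_lt (hc : Continuous φ) (hm : StrictMono φ) {s t : ℝ} (h : s < t) :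
    avg φ s t < φ t := by
  set m := (s + t) / 2 with hmdef
  have hsm : s < m := by simp only [hmdef]; linarith
  have hmt : m < t := by simp only [hmdef]; linarith
  rw [avg, div_lt_iff₀ (by linarith), G_sub hc, integral_split hc s m t]
  have h1 := integral_le_of_le hc hm.monotone hsm.le
  have h2 := integral_le_of_le hc hm.monotone hmt.le
  have h3 : φ m < φ t := hm hmt
  nlinarith

lemma lt_avg (hc : Continuous φ) (hm : StrictMono φ) {s t : ℝ} (h : s < t) :
    φ s < avg φ s t := by
  set m := (s + t) / 2 with hmdef
  have hsm : s < m := by simp only [hmdef]; linarith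
  have hmt : m < t := by simp only [hmdef]; linarith
  rw [avg, lt_div_iff₀ (by linarith), G_sub hc, integral_split hc s m t]
  have h1 := le_integral_of_le hc hm.monotone hsm.le
  have h2 := le_integral_of_le hc hm.monotone hmt.le
  have h3 : φ s < φ m := hm hsm
  nlinarith

/-- avg is strictly monotone in the right endpoint -/
lemma avg_mono_right (hc : Continuous φ) (hm : StrictMono φ) {s t t' : ℝ}
    (h1 : s < t) (h2 : t < t') : avg φ s t < avg φ s t' := by
  have key : G φ t' - G φ s = (G φ t - G φ s) + (G φ t' - G φ t) := by ring
  have hint : (t' - t) * φ t ≤ G φ t' - G φ t := by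
    rw [G_sub hc]; exact le_integral_of_le hc hm.monotone h2.le
  have hlt : avg φ s t < φ t := avg_lt hc hm h1
  rw [avg, div_lt_iff₀ (by linarith)] at hlt
  show (G φ t - G φ s) / (t - s) < (G φ t' - G φ s) / (t' - s)
  rw [div_lt_div_iff₀ (by linarith) (by linarith)]
  nlinarith [hlt, hint]

/-- avg is strictly monotone in the left endpoint -/
lemma avg_mono_left (hc : Continuous φ) (hm : StrictMono φ) {s s' t : ℝ}
    (h1 : s < s') (h2 : s' < t) : avg φ s t < avg φ s' t := by
  have hint : G φ s' - G φ s ≤ (s' - s) * φ s' := by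
    rw [G_sub hc]; exact integral_le_of_le hc hm.monotone h1.le
  have hlt : φ s' < avg φ s' t := lt_avg hc hm h2
  rw [avg, lt_div_iff₀ (by linarith)] at hlt
  show (G φ t - G φ s) / (t - s) < (G φ t - G φ s') / (t - s')
  rw [div_lt_div_iff₀ (by linarith) (by linarith)]
  nlinarith [hlt, hint]

lemma avg_mono_left_weak (hc : Continuous φ) (hm : StrictMono φ) {s s' t : ℝ}
    (h1 : s ≤ s') (h2 : s' < t) : avg φ s t ≤ avg φ s' t := by
  rcases eq_or_lt_of_le h1 with rfl | h1
  · exact le_refl _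
  · exact (avg_mono_left hc hm h1 h2).le

/-- combined strict monotonicity of averages -/
lemma avg_lt_avg (hc : Continuous φ) (hm : StrictMono φ) {s₁ t₁ s₂ t₂ : ℝ}
    (hs : s₁ ≤ s₂) (ht : t₁ ≤ t₂) (h₁ : s₁ < t₁) (h₂ : s₂ < t₂)
    (hne : s₁ < s₂ ∨ t₁ < t₂) : avg φ s₁ t₁ < avg φ s₂ t₂ := by
  rcases eq_or_lt_of_le ht with rfl | ht'
  · rcases hne with h | h
    · exact lt_of_lt_of_le (avg_mono_left hc hm h h₂) (le_refl _)
    · exact absurd h (lt_irrefl _)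
  · calc avg φ s₁ t₁ < avg φ s₁ t₂ := avg_mono_right hc hm h₁ ht'
      _ ≤ avg φ s₂ t₂ := avg_mono_left_weak hc hm hs h₂


/-- the quasisymmetry property, restated -/
def QS (k : ℝ) (φ : ℝ → ℝ) : Prop :=
  ∀ x t : ℝ, 0 < t →
    1 / k ≤ (φ (x + t) - φ x) / (φ x - φ (x - t)) ∧
      (φ (x + t) - φ x) / (φ x - φ (x - t)) ≤ k

lemma qs_bounds (hm : StrictMono φ) {k : ℝ} (hk : 1 ≤ k) (hqs : QS k φ)
    (x t : ℝ) (ht : 0 < t) :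
    φ (x + t) - φ x ≤ k * (φ x - φ (x - t)) ∧
      φ x - φ (x - t) ≤ k * (φ (x + t) - φ x) := by
  have hd : 0 < φ x - φ (x - t) := sub_pos.mpr (hm (by linarith))
  have hn : 0 < φ (x + t) - φ x := sub_pos.mpr (hm (by linarith))
  obtain ⟨h1, h2⟩ := hqs x t ht
  constructor
  · rw [div_le_iff₀ hd] at h2; linarith
  · have hk0 : 0 < k := by linarith
    rw [div_le_div_iff₀ hk0 hd] at h1
    linarith

lemma avg_half (hc : Continuous φ) {s t : ℝ} (h : s < t) :
    avg φ s t = (avg φ s ((s+t)/2) + avg φ ((s+t)/2) t) / 2 := by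
  have h1 : (s+t)/2 - s = (t - s)/2 := by ring
  have h2 : t - (s+t)/2 = (t - s)/2 := by ring
  rw [avg, avg, avg, h1, h2]
  have : t - s ≠ 0 := by linarith
  field_simp
  ring

/-- bounds for the right interval [x, x+y] -/
lemma right_bounds (hc : Continuous φ) (hm : StrictMono φ) {k : ℝ} (hk : 1 ≤ k)
    (hqs : QS k φ) (x y : ℝ) (hy : 0 < y) :
    (φ (x+y) - φ x) / (2*(k+1)) ≤ φ (x+y) - avg φ x (x+y) ∧
      avg φ x (x+y) ≤ φ (x+y) ∧
      (φ (x+y) - φ x) / (2*(k+1)) ≤ avg φ x (x+y) - φ x ∧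
      φ x ≤ avg φ x (x+y) := by
  have hxy : x < x + y := by linarith
  set m := (x + (x+y))/2 with hmdef
  have hm12 : m = x + y/2 := by rw [hmdef]; ring
  have hxm : x < m := by rw [hm12]; linarith
  have hmy : m < x + y := by rw [hm12]; linarith
  have hsplit := avg_half hc hxy
  rw [← hmdef] at hsplit
  have hA1 : avg φ x m ≤ φ m := avg_le hc hm.monotone hxm
  have hA2 : φ x ≤ avg φ x m := le_avg hc hm.monotone hxm
  have hA3 : avg φ m (x+y) ≤ φ (x+y) := avg_le hc hm.monotone hmy
  have hA4 : φ m ≤ avg φ m (x+y) := le_avg hc hm.monotone hmy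
  have hq : φ (m + y/2) - φ m ≤ k * (φ m - φ (m - y/2)) ∧
      φ m - φ (m - y/2) ≤ k * (φ (m + y/2) - φ m) :=
    qs_bounds hm hk hqs m (y/2) (by linarith)
  have he1 : m + y/2 = x + y := by rw [hm12]; ring
  have he2 : m - y/2 = x := by rw [hm12]; ring
  rw [he1, he2] at hq
  obtain ⟨hq1, hq2⟩ := hq
  have hkpos : (0:ℝ) < 2*(k+1) := by linarith
  refine ⟨?_, ?_, ?_, ?_⟩
  · rw [div_le_iff₀ hkpos]; nlinarith
  · linarith
  · rw [div_le_iff₀ hkpos]; nlinarith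
  · linarith

/-- bounds for the left interval [x-y, x] -/
lemma left_bounds (hc : Continuous φ) (hm : StrictMono φ) {k : ℝ} (hk : 1 ≤ k)
    (hqs : QS k φ) (x y : ℝ) (hy : 0 < y) :
    (φ x - φ (x-y)) / (2*(k+1)) ≤ avg φ (x-y) x - φ (x-y) ∧
      φ (x-y) ≤ avg φ (x-y) x ∧
      (φ x - φ (x-y)) / (2*(k+1)) ≤ φ x - avg φ (x-y) x ∧
      avg φ (x-y) x ≤ φ x := by
  have hxy : x - y < x := by linarith
  set m := ((x-y) + x)/2 with hmdef
  have hm12 : m = x - y/2 := by rw [hmdef]; ring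
  have hxm : x - y < m := by rw [hm12]; linarith
  have hmy : m < x := by rw [hm12]; linarith
  have hsplit := avg_half hc hxy
  rw [← hmdef] at hsplit
  have hA1 : avg φ (x-y) m ≤ φ m := avg_le hc hm.monotone hxm
  have hA2 : φ (x-y) ≤ avg φ (x-y) m := le_avg hc hm.monotone hxm
  have hA3 : avg φ m x ≤ φ x := avg_le hc hm.monotone hmy
  have hA4 : φ m ≤ avg φ m x := le_avg hc hm.monotone hmy
  have hq : φ (m + y/2) - φ m ≤ k * (φ m - φ (m - y/2)) ∧
      φ m - φ (m - y/2) ≤ k * (φ (m + y/2) - φ m) :=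
    qs_bounds hm hk hqs m (y/2) (by linarith)
  have he1 : m + y/2 = x := by rw [hm12]; ring
  have he2 : m - y/2 = x - y := by rw [hm12]; ring
  rw [he1, he2] at hq
  obtain ⟨hq1, hq2⟩ := hq
  have hkpos : (0:ℝ) < 2*(k+1) := by linarith
  refine ⟨?_, ?_, ?_, ?_⟩
  · rw [div_le_iff₀ hkpos]; nlinarith
  · linarith
  · rw [div_le_iff₀ hkpos]; nlinarith
  · linarith

/-- core algebraic inequality for the quasiconformality bound -/
lemma qc_algebra {k a b P Q : ℝ} (hk : 1 ≤ k) (ha : 0 < a) (hb : 0 < b)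
    (hab : a ≤ k*b) (hba : b ≤ k*a)
    (hP1 : a/(2*(k+1)) ≤ P) (hP2 : P ≤ a) (hQ1 : b/(2*(k+1)) ≤ Q) (hQ2 : Q ≤ b) :
    (((a+b)-(P+Q))^2 + ((a-b)+(P-Q))^2 < ((a+b)+(P+Q))^2 + ((a-b)-(P-Q))^2) ∧
    (4*k*(k+1)+1)^2 * (((a+b)-(P+Q))^2 + ((a-b)+(P-Q))^2) ≤
      (4*k*(k+1)-1)^2 * (((a+b)+(P+Q))^2 + ((a-b)-(P-Q))^2) := by
  have hkpos : (0:ℝ) < 2*(k+1) := by linarith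
  have hP1' : a ≤ P * (2*(k+1)) := (div_le_iff₀ hkpos).mp hP1
  have hQ1' : b ≤ Q * (2*(k+1)) := (div_le_iff₀ hkpos).mp hQ1
  have hP0 : 0 < P := lt_of_lt_of_le (div_pos ha hkpos) hP1
  have hQ0 : 0 < Q := lt_of_lt_of_le (div_pos hb hkpos) hQ1
  clear hP1 hQ1
  -- key estimate: a²+b²+P²+Q² ≤ C (aQ + bP) with C = 4k(k+1)
  have h1 : a^2 ≤ k*(a*b) := by nlinarith [mul_le_mul_of_nonneg_left hab ha.le]
  have h2 : b^2 ≤ k*(a*b) := by nlinarith [mul_le_mul_of_nonneg_left hba hb.le]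
  have h3 : P^2 ≤ a^2 := pow_le_pow_left₀ hP0.le hP2 2
  have h4 : Q^2 ≤ b^2 := pow_le_pow_left₀ hQ0.le hQ2 2
  have h5 : 2*(a*b) ≤ (2*(k+1)) * (a*Q + b*P) := by
    nlinarith [mul_le_mul_of_nonneg_left hQ1' ha.le, mul_le_mul_of_nonneg_left hP1' hb.le]
  have hE : a^2 + b^2 + P^2 + Q^2 ≤ (4*k*(k+1)) * (a*Q + b*P) := by
    nlinarith [mul_le_mul_of_nonneg_left h5 (by linarith : (0:ℝ) ≤ k)]
  set C := 4*k*(k+1) with hC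
  have hC8 : (8:ℝ) ≤ C := by rw [hC]; nlinarith
  set s1 := ((a+b)+(P+Q))^2 + ((a-b)-(P-Q))^2 with hs1
  set s2 := ((a+b)-(P+Q))^2 + ((a-b)+(P-Q))^2 with hs2
  have hdiff : s1 - s2 = 8*(a*Q + b*P) := by rw [hs1, hs2]; ring
  have hsum : s1 + s2 = 4*(a^2 + b^2 + P^2 + Q^2) := by rw [hs1, hs2]; ring
  have hpos : 0 < a*Q + b*P := by positivity
  have key : 2*(s1+s2) ≤ C*(s1-s2) := by
    rw [hdiff, hsum]
    nlinarith [hE]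
  have hmain : (C+2)*s2 ≤ (C-2)*s1 := by nlinarith [key]
  constructor
  · linarith [hdiff, hpos]
  · have hs1nn : 0 ≤ s1 := by rw [hs1]; positivity
    have hid : (C+2) * ((C-1)^2*s1 - (C+1)^2*s2)
        = (C+1)^2*((C-2)*s1 - (C+2)*s2) + 4*s1 := by ring
    have h2' : 0 ≤ (C+1)^2*((C-2)*s1 - (C+2)*s2) + 4*s1 := by
      have := mul_nonneg (sq_nonneg (C+1)) (by linarith [hmain] : (0:ℝ) ≤ (C-2)*s1 - (C+2)*s2)
      linarith
    have hX : 0 ≤ (C+2) * ((C-1)^2*s1 - (C+1)^2*s2) := by rw [hid]; exact h2'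
    have hX' : 0 ≤ (C-1)^2*s1 - (C+1)^2*s2 :=
      nonneg_of_mul_nonneg_right hX (by linarith)
    linarith [hX']

/-! ### The Beurling–Ahlfors extension and its derivative -/

def BAu (φ : ℝ → ℝ) (x y : ℝ) : ℝ := (G φ (x+y) - G φ (x-y)) / (2*y)
def BAv (φ : ℝ → ℝ) (x y : ℝ) : ℝ := (G φ (x+y) + G φ (x-y) - 2*G φ x) / (2*y)
def BAF (φ : ℝ → ℝ) (z : ℂ) : ℂ := ↑(BAu φ z.re z.im) + ↑(BAv φ z.re z.im) * Complex.I

def ux (φ : ℝ → ℝ) (x y : ℝ) : ℝ := (φ (x+y) - φ (x-y)) / (2*y)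
def vx (φ : ℝ → ℝ) (x y : ℝ) : ℝ := (φ (x+y) + φ (x-y) - 2*φ x) / (2*y)
def uy (φ : ℝ → ℝ) (x y : ℝ) : ℝ :=
  ((φ (x+y) + φ (x-y))*y - (G φ (x+y) - G φ (x-y))) / (2*y^2)
def vy (φ : ℝ → ℝ) (x y : ℝ) : ℝ :=
  ((φ (x+y) - φ (x-y))*y - (G φ (x+y) + G φ (x-y) - 2*G φ x)) / (2*y^2)

lemma clm_eq_of_basis {M : Type*} [NormedAddCommGroup M] [NormedSpace ℝ M]
    {L L' : ℂ →L[ℝ] M} (h1 : L 1 = L' 1) (hI : L Complex.I = L' Complex.I) :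
    L = L' := by
  ext w
  have hw : w = (w.re : ℝ) • (1:ℂ) + (w.im : ℝ) • Complex.I := by
    simp [Complex.real_smul, Complex.re_add_im]
  rw [hw, map_add, map_add, map_smul, map_smul, map_smul, map_smul, h1, hI]

section deriv
variable {φ : ℝ → ℝ}

/-- derivative of `w ↦ G φ (w.re + c * w.im)` -/
lemma hasFDeriv_G_re_add (hc : Continuous φ) (z : ℂ) :
    HasFDerivAt (fun w : ℂ => G φ (w.re + w.im))
      ((φ (z.re + z.im)) • ((Complex.reCLM + Complex.imCLM : ℂ →L[ℝ] ℝ))) z := by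
  have hl : HasFDerivAt (fun w : ℂ => w.re + w.im)
      ((Complex.reCLM + Complex.imCLM : ℂ →L[ℝ] ℝ)) z := by
    convert (Complex.reCLM + Complex.imCLM : ℂ →L[ℝ] ℝ).hasFDerivAt (x := z) using 1; ext w; simp
  exact (hasDerivG hc (z.re + z.im)).comp_hasFDerivAt z hl

lemma hasFDeriv_G_re_sub (hc : Continuous φ) (z : ℂ) :
    HasFDerivAt (fun w : ℂ => G φ (w.re - w.im))
      ((φ (z.re - z.im)) • ((Complex.reCLM - Complex.imCLM : ℂ →L[ℝ] ℝ))) z := by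
  have hl : HasFDerivAt (fun w : ℂ => w.re - w.im)
      ((Complex.reCLM - Complex.imCLM : ℂ →L[ℝ] ℝ)) z := by
    convert (Complex.reCLM - Complex.imCLM : ℂ →L[ℝ] ℝ).hasFDerivAt (x := z) using 1; ext w; simp
  exact (hasDerivG hc (z.re - z.im)).comp_hasFDerivAt z hl

lemma hasFDeriv_G_re (hc : Continuous φ) (z : ℂ) :
    HasFDerivAt (fun w : ℂ => G φ w.re)
      ((φ z.re) • (Complex.reCLM : ℂ →L[ℝ] ℝ)) z := by
  have hl : HasFDerivAt (fun w : ℂ => w.re) (Complex.reCLM : ℂ →L[ℝ] ℝ) z :=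
    (Complex.reCLM : ℂ →L[ℝ] ℝ).hasFDerivAt
  exact (hasDerivG hc z.re).comp_hasFDerivAt z hl

lemma hasFDeriv_inv2im {z : ℂ} (hz : 0 < z.im) :
    HasFDerivAt (fun w : ℂ => (2*w.im)⁻¹)
      ((-((2*z.im)^2)⁻¹) • ((2:ℝ) • (Complex.imCLM : ℂ →L[ℝ] ℝ))) z := by
  have hl : HasFDerivAt (fun w : ℂ => 2*w.im) ((2:ℝ) • (Complex.imCLM : ℂ →L[ℝ] ℝ)) z := by
    convert ((2:ℝ) • (Complex.imCLM : ℂ →L[ℝ] ℝ)).hasFDerivAt (x := z) using 1; ext w; simp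
  exact (hasDerivAt_inv (by positivity)).comp_hasFDerivAt z hl

/-- The full derivative of the extension. -/
lemma hasFDeriv_BAF (hc : Continuous φ) {z : ℂ} (hz : 0 < z.im) :
    HasFDerivAt (BAF φ)
      ((Complex.reCLM : ℂ →L[ℝ] ℝ).smulRight
          (↑(ux φ z.re z.im) + ↑(vx φ z.re z.im) * Complex.I) +
        (Complex.imCLM : ℂ →L[ℝ] ℝ).smulRight
          (↑(uy φ z.re z.im) + ↑(vy φ z.re z.im) * Complex.I)) z := by
  have hy : (2:ℝ)*z.im ≠ 0 := by positivity
  have hNumU : HasFDerivAt (fun w : ℂ => G φ (w.re + w.im) - G φ (w.re - w.im))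
      ((φ (z.re + z.im)) • (Complex.reCLM + Complex.imCLM : ℂ →L[ℝ] ℝ)
        - (φ (z.re - z.im)) • (Complex.reCLM - Complex.imCLM : ℂ →L[ℝ] ℝ)) z :=
    (hasFDeriv_G_re_add hc z).sub (hasFDeriv_G_re_sub hc z)
  have hNumV : HasFDerivAt
      (fun w : ℂ => G φ (w.re + w.im) + G φ (w.re - w.im) - 2*G φ w.re)
      ((φ (z.re + z.im)) • (Complex.reCLM + Complex.imCLM : ℂ →L[ℝ] ℝ)
        + (φ (z.re - z.im)) • (Complex.reCLM - Complex.imCLM : ℂ →L[ℝ] ℝ)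
        - (2:ℝ) • ((φ z.re) • (Complex.reCLM : ℂ →L[ℝ] ℝ))) z :=
    ((hasFDeriv_G_re_add hc z).add (hasFDeriv_G_re_sub hc z)).sub
      ((hasFDeriv_G_re hc z).const_smul (2:ℝ))
  have hInv := hasFDeriv_inv2im hz
  have hU0 := hNumU.mul hInv
  have hV0 := hNumV.mul hInv
  have hU : HasFDerivAt (fun w : ℂ => BAu φ w.re w.im)
      ((ux φ z.re z.im) • (Complex.reCLM : ℂ →L[ℝ] ℝ)
        + (uy φ z.re z.im) • (Complex.imCLM : ℂ →L[ℝ] ℝ)) z := by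
    have hU1 : HasFDerivAt (fun w : ℂ => BAu φ w.re w.im)
        ((G φ (z.re + z.im) - G φ (z.re - z.im)) •
            ((-((2*z.im)^2)⁻¹) • ((2:ℝ) • (Complex.imCLM : ℂ →L[ℝ] ℝ)))
          + (2*z.im)⁻¹ • ((φ (z.re + z.im)) • (Complex.reCLM + Complex.imCLM : ℂ →L[ℝ] ℝ)
              - (φ (z.re - z.im)) • (Complex.reCLM - Complex.imCLM : ℂ →L[ℝ] ℝ))) z := by
      simpa [BAu, div_eq_mul_inv, Pi.mul_def] using hU0
    refine hU1.congr_fderiv (clm_eq_of_basis ?_ ?_)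
    · simp only [ContinuousLinearMap.add_apply, ContinuousLinearMap.smul_apply,
        ContinuousLinearMap.sub_apply, Complex.reCLM_apply, Complex.imCLM_apply,
        Complex.one_re, Complex.one_im, smul_eq_mul, ux]
      field_simp
      all_goals ring
    · simp only [ContinuousLinearMap.add_apply, ContinuousLinearMap.smul_apply,
        ContinuousLinearMap.sub_apply, Complex.reCLM_apply, Complex.imCLM_apply,
        Complex.I_re, Complex.I_im, smul_eq_mul, uy]
      field_simp
      all_goals ring
  have hV : HasFDerivAt (fun w : ℂ => BAv φ w.re w.im)
      ((vx φ z.re z.im) • (Complex.reCLM : ℂ →L[ℝ] ℝ)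
        + (vy φ z.re z.im) • (Complex.imCLM : ℂ →L[ℝ] ℝ)) z := by
    have hV1 : HasFDerivAt (fun w : ℂ => BAv φ w.re w.im)
        ((G φ (z.re + z.im) + G φ (z.re - z.im) - 2*G φ z.re) •
            ((-((2*z.im)^2)⁻¹) • ((2:ℝ) • (Complex.imCLM : ℂ →L[ℝ] ℝ)))
          + (2*z.im)⁻¹ • ((φ (z.re + z.im)) • (Complex.reCLM + Complex.imCLM : ℂ →L[ℝ] ℝ)
              + (φ (z.re - z.im)) • (Complex.reCLM - Complex.imCLM : ℂ →L[ℝ] ℝ)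
              - (2:ℝ) • ((φ z.re) • (Complex.reCLM : ℂ →L[ℝ] ℝ)))) z := by
      simpa [BAv, div_eq_mul_inv, Pi.mul_def] using hV0
    refine hV1.congr_fderiv (clm_eq_of_basis ?_ ?_)
    · simp only [ContinuousLinearMap.add_apply, ContinuousLinearMap.smul_apply,
        ContinuousLinearMap.sub_apply, Complex.reCLM_apply, Complex.imCLM_apply,
        Complex.one_re, Complex.one_im, smul_eq_mul, vx]
      field_simp
      all_goals ring
    · simp only [ContinuousLinearMap.add_apply, ContinuousLinearMap.smul_apply,
        ContinuousLinearMap.sub_apply, Complex.reCLM_apply, Complex.imCLM_apply,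
        Complex.I_re, Complex.I_im, smul_eq_mul, vy]
      field_simp
      all_goals ring
  have hF := (Complex.ofRealCLM.hasFDerivAt.comp z hU).add
      ((Complex.ofRealCLM.hasFDerivAt.comp z hV).mul_const Complex.I)
  refine hF.congr_fderiv (clm_eq_of_basis ?_ ?_)
  · simp only [ContinuousLinearMap.add_apply, ContinuousLinearMap.coe_comp',
      Function.comp_apply, ContinuousLinearMap.smulRight_apply,
      ContinuousLinearMap.smul_apply, Complex.reCLM_apply, Complex.imCLM_apply,
      Complex.ofRealCLM_apply, Complex.one_re, Complex.one_im, smul_eq_mul,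
      Complex.real_smul, one_smul, Complex.ofReal_add, Complex.ofReal_mul,
      Complex.ofReal_zero, Complex.ofReal_one]
    push_cast
    ring
  · simp only [ContinuousLinearMap.add_apply, ContinuousLinearMap.coe_comp',
      Function.comp_apply, ContinuousLinearMap.smulRight_apply,
      ContinuousLinearMap.smul_apply, Complex.reCLM_apply, Complex.imCLM_apply,
      Complex.ofRealCLM_apply, Complex.I_re, Complex.I_im, smul_eq_mul,
      Complex.real_smul, one_smul, Complex.ofReal_add, Complex.ofReal_mul,
      Complex.ofReal_zero, Complex.ofReal_one]
    push_cast
    ring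
end deriv

/-! ### Wirtinger derivatives of the extension -/

section wirt
variable {φ : ℝ → ℝ}

lemma isOpen_upperHalf : IsOpen UpperHalf := isOpen_lt continuous_const Complex.continuous_im

lemma mem_upperHalf_iff {z : ℂ} : z ∈ UpperHalf ↔ 0 < z.im := Iff.rfl

lemma contDiff_G (hc : Continuous φ) : ContDiff ℝ 1 (G φ) := by
  rw [contDiff_one_iff_deriv]
  refine ⟨fun x => (hasDerivG hc x).differentiableAt, ?_⟩
  have : deriv (G φ) = φ := funext fun x => (hasDerivG hc x).deriv
  rw [this]; exact hc

lemma contDiffOn_BAF (hc : Continuous φ) : ContDiffOn ℝ 1 (BAF φ) UpperHalf := by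
  have hre : ContDiff ℝ 1 (fun w : ℂ => w.re + w.im) := by
    convert ((Complex.reCLM + Complex.imCLM : ℂ →L[ℝ] ℝ)).contDiff (n := 1) using 1; ext w; simp
  have hse : ContDiff ℝ 1 (fun w : ℂ => w.re - w.im) := by
    convert ((Complex.reCLM - Complex.imCLM : ℂ →L[ℝ] ℝ)).contDiff (n := 1) using 1; ext w; simp
  have hr0 : ContDiff ℝ 1 (fun w : ℂ => w.re) := (Complex.reCLM : ℂ →L[ℝ] ℝ).contDiff
  have him : ContDiff ℝ 1 (fun w : ℂ => w.im) := (Complex.imCLM : ℂ →L[ℝ] ℝ).contDiff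
  have h1 : ContDiff ℝ 1 (fun w : ℂ => G φ (w.re + w.im)) := (contDiff_G hc).comp hre
  have h2 : ContDiff ℝ 1 (fun w : ℂ => G φ (w.re - w.im)) := (contDiff_G hc).comp hse
  have h3 : ContDiff ℝ 1 (fun w : ℂ => G φ w.re) := (contDiff_G hc).comp hr0
  have hden : ContDiffOn ℝ 1 (fun w : ℂ => 2*w.im) UpperHalf :=
    (contDiff_const.mul him).contDiffOn
  have hdenne : ∀ w ∈ UpperHalf, (2:ℝ)*w.im ≠ 0 := by
    intro w hw
    have : (0:ℝ) < w.im := hw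
    positivity
  have hU : ContDiffOn ℝ 1 (fun w : ℂ => BAu φ w.re w.im) UpperHalf :=
    ContDiffOn.div ((h1.sub h2).contDiffOn) hden hdenne
  have hV : ContDiffOn ℝ 1 (fun w : ℂ => BAv φ w.re w.im) UpperHalf :=
    ContDiffOn.div (((h1.add h2).sub (contDiff_const.mul h3)).contDiffOn) hden hdenne
  exact (Complex.ofRealCLM.contDiff.comp_contDiffOn hU).add
    ((Complex.ofRealCLM.contDiff.comp_contDiffOn hV).mul contDiffOn_const)

lemma fderivWithin_BAF (hc : Continuous φ) {z : ℂ} (hz : z ∈ UpperHalf) :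
    fderivWithin ℝ (BAF φ) UpperHalf z 1
        = ↑(ux φ z.re z.im) + ↑(vx φ z.re z.im) * Complex.I ∧
      fderivWithin ℝ (BAF φ) UpperHalf z Complex.I
        = ↑(uy φ z.re z.im) + ↑(vy φ z.re z.im) * Complex.I := by
  have hzim : 0 < z.im := hz
  have h := ((hasFDeriv_BAF hc hzim).hasFDerivWithinAt (s := UpperHalf)).fderivWithin
    (isOpen_upperHalf.uniqueDiffWithinAt hz)
  rw [h]
  constructor <;>
    simp [ContinuousLinearMap.smulRight_apply, Complex.real_smul]

lemma wirt_BAF (hc : Continuous φ) {z : ℂ} (hz : z ∈ UpperHalf) :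
    wirtZ (BAF φ) z = (↑(ux φ z.re z.im + vy φ z.re z.im)
        + ↑(vx φ z.re z.im - uy φ z.re z.im) * Complex.I) / 2 ∧
      wirtZbar (BAF φ) z = (↑(ux φ z.re z.im - vy φ z.re z.im)
        + ↑(vx φ z.re z.im + uy φ z.re z.im) * Complex.I) / 2 := by
  obtain ⟨h1, hI⟩ := fderivWithin_BAF hc hz
  constructor
  · rw [wirtZ, h1, hI]
    push_cast
    linear_combination (-(vy φ z.re z.im : ℂ)/2) * Complex.I_sq
  · rw [wirtZbar, h1, hI]
    push_cast
    linear_combination ((vy φ z.re z.im : ℂ)/2) * Complex.I_sq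

lemma normSq_aux (p q : ℝ) :
    Complex.normSq ((↑p + ↑q * Complex.I)/2) = (p^2 + q^2)/4 := by
  have h : ((↑p + ↑q * Complex.I)/2 : ℂ) = ↑(p/2) + ↑(q/2) * Complex.I := by
    push_cast; ring
  rw [h, Complex.normSq_add_mul_I]; ring

end wirt

/-! ### The pointwise quasiconformal estimate -/

section qcpoint
variable {φ : ℝ → ℝ}

lemma BAu_eq {x y : ℝ} (hy : 0 < y) :
    BAu φ x y = (avg φ x (x+y) + avg φ (x-y) x)/2 := by
  simp only [BAu, avg]
  rw [show x + y - x = y by ring, show x - (x-y) = y by ring, ← add_div, div_div,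
    show (G φ (x+y) - G φ x) + (G φ x - G φ (x-y)) = G φ (x+y) - G φ (x-y) by ring,
    show y*2 = 2*y by ring]

lemma BAv_eq {x y : ℝ} (hy : 0 < y) :
    BAv φ x y = (avg φ x (x+y) - avg φ (x-y) x)/2 := by
  simp only [BAv, avg]
  rw [show x + y - x = y by ring, show x - (x-y) = y by ring, ← sub_div, div_div,
    show (G φ (x+y) - G φ x) - (G φ x - G φ (x-y)) = G φ (x+y) + G φ (x-y) - 2*G φ x by ring,
    show y*2 = 2*y by ring]

lemma BAv_pos (hc : Continuous φ) (hm : StrictMono φ) {x y : ℝ} (hy : 0 < y) :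
    0 < BAv φ x y := by
  rw [BAv_eq hy]
  have h1 : φ x < avg φ x (x+y) := lt_avg hc hm (by linarith)
  have h2 : avg φ (x-y) x < φ x := avg_lt hc hm (by linarith)
  linarith

lemma sq_div_aux (p q y : ℝ) (hy : y ≠ 0) :
    ((p/(2*y))^2 + (q/(2*y))^2)/4 = (p^2 + q^2)/(16*y^2) := by
  rw [div_pow, div_pow, ← add_div, div_div, show ((2*y)^2*4 : ℝ) = 16*y^2 by ring]

set_option maxHeartbeats 1000000 in
lemma qc_at (hc : Continuous φ) (hm : StrictMono φ) {k : ℝ} (hk : 1 ≤ k) (hqs : QS k φ)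
    {z : ℂ} (hz : z ∈ UpperHalf) :
    ‖wirtZbar (BAF φ) z‖ < ‖wirtZ (BAF φ) z‖ ∧
      ‖wirtZbar (BAF φ) z‖
        ≤ ((4*k*(k+1) - 1) / (4*k*(k+1) + 1)) * ‖wirtZ (BAF φ) z‖ := by
  obtain ⟨hW1, hW2⟩ := wirt_BAF hc hz
  have hy : 0 < z.im := hz
  have hyne : z.im ≠ 0 := ne_of_gt hy
  have h16 : (0:ℝ) < 16*z.im^2 := by positivity
  obtain ⟨hab, hba⟩ := qs_bounds hm hk hqs z.re z.im hy
  obtain ⟨hP1, hR1, hp1, hR2⟩ := right_bounds hc hm hk hqs z.re z.im hy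
  obtain ⟨hQ1, hL1, hq1, hL2⟩ := left_bounds hc hm hk hqs z.re z.im hy
  have ha : 0 < φ (z.re + z.im) - φ z.re := sub_pos.mpr (hm (by linarith))
  have hb : 0 < φ z.re - φ (z.re - z.im) := sub_pos.mpr (hm (by linarith))
  have hP2 : φ (z.re+z.im) - avg φ z.re (z.re+z.im)
      ≤ φ (z.re+z.im) - φ z.re := by linarith
  have hQ2 : avg φ (z.re-z.im) z.re - φ (z.re-z.im)
      ≤ φ z.re - φ (z.re-z.im) := by linarith
  set a := φ (z.re + z.im) - φ z.re with ha'
  set b := φ z.re - φ (z.re - z.im) with hb'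
  set P := φ (z.re+z.im) - avg φ z.re (z.re+z.im) with hP'
  set Q := avg φ (z.re-z.im) z.re - φ (z.re-z.im) with hQ'
  have halg := qc_algebra hk ha hb hab hba hP1 hP2 hQ1 hQ2
  -- identities for the partial derivatives
  have hux : ux φ z.re z.im = (a+b)/(2*z.im) := by
    rw [ha', hb']; simp only [ux]; ring
  have hvx : vx φ z.re z.im = (a-b)/(2*z.im) := by
    rw [ha', hb']; simp only [vx]; ring
  have huy : uy φ z.re z.im = (P-Q)/(2*z.im) := by
    rw [hP', hQ']; simp only [uy, avg]
    rw [show z.re + z.im - z.re = z.im by ring, show z.re - (z.re - z.im) = z.im by ring]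
    field_simp
    ring
  have hvy : vy φ z.re z.im = (P+Q)/(2*z.im) := by
    rw [hP', hQ']; simp only [vy, avg]
    rw [show z.re + z.im - z.re = z.im by ring, show z.re - (z.re - z.im) = z.im by ring]
    field_simp
    ring
  rw [hux, hvx, huy, hvy] at hW1 hW2
  have hn1 : Complex.normSq (wirtZ (BAF φ) z)
      = (((a+b)+(P+Q))^2 + ((a-b)-(P-Q))^2)/(16*z.im^2) := by
    rw [hW1]
    rw [show ((a+b)/(2*z.im) + (P+Q)/(2*z.im) : ℝ) = ((a+b)+(P+Q))/(2*z.im) by ring,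
      show ((a-b)/(2*z.im) - (P-Q)/(2*z.im) : ℝ) = ((a-b)-(P-Q))/(2*z.im) by ring]
    rw [normSq_aux, sq_div_aux _ _ _ hyne]
  have hn2 : Complex.normSq (wirtZbar (BAF φ) z)
      = (((a+b)-(P+Q))^2 + ((a-b)+(P-Q))^2)/(16*z.im^2) := by
    rw [hW2]
    rw [show ((a+b)/(2*z.im) - (P+Q)/(2*z.im) : ℝ) = ((a+b)-(P+Q))/(2*z.im) by ring,
      show ((a-b)/(2*z.im) + (P-Q)/(2*z.im) : ℝ) = ((a-b)+(P-Q))/(2*z.im) by ring]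
    rw [normSq_aux, sq_div_aux _ _ _ hyne]

  have hCpos : (0:ℝ) < 4*k*(k+1) + 1 := by nlinarith
  have hCm : (0:ℝ) ≤ 4*k*(k+1) - 1 := by nlinarith
  have hc0 : 0 ≤ (4*k*(k+1) - 1)/(4*k*(k+1) + 1) := div_nonneg hCm hCpos.le
  constructor
  · have hlt : Complex.normSq (wirtZbar (BAF φ) z) < Complex.normSq (wirtZ (BAF φ) z) := by
      rw [hn1, hn2]
      exact (div_lt_div_iff_of_pos_right h16).mpr halg.1
    rw [Complex.norm_def, Complex.norm_def]
    exact Real.sqrt_lt_sqrt (Complex.normSq_nonneg _) hlt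
  · have hle : Complex.normSq (wirtZbar (BAF φ) z)
        ≤ ((4*k*(k+1) - 1)/(4*k*(k+1) + 1))^2 * Complex.normSq (wirtZ (BAF φ) z) := by
      rw [hn1, hn2, div_pow, div_mul_div_comm, div_le_div_iff₀ h16 (by positivity)]
      nlinarith [mul_le_mul_of_nonneg_right halg.2 h16.le]
    rw [Complex.norm_def, Complex.norm_def]
    calc Real.sqrt (Complex.normSq (wirtZbar (BAF φ) z))
        ≤ Real.sqrt (((4*k*(k+1) - 1)/(4*k*(k+1) + 1))^2
            * Complex.normSq (wirtZ (BAF φ) z)) := Real.sqrt_le_sqrt hle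
      _ = (4*k*(k+1) - 1)/(4*k*(k+1) + 1) * Real.sqrt (Complex.normSq (wirtZ (BAF φ) z)) := by
          rw [Real.sqrt_mul (sq_nonneg _), Real.sqrt_sq hc0]

end qcpoint

/-! ### Injectivity and surjectivity -/

section topol
variable {φ : ℝ → ℝ}

lemma re_im_BAF (z : ℂ) : (BAF φ z).re = BAu φ z.re z.im ∧ (BAF φ z).im = BAv φ z.re z.im := by
  constructor <;> simp [BAF]

lemma injOn_BAF (hc : Continuous φ) (hm : StrictMono φ) : InjOn (BAF φ) UpperHalf := by
  have main : ∀ z1 z2 : ℂ, z1 ∈ UpperHalf → z2 ∈ UpperHalf → BAF φ z1 = BAF φ z2 →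
      ¬ (z1.re < z2.re) := by
    intro z1 z2 h1 h2 heq hlt
    have hy1 : 0 < z1.im := h1
    have hy2 : 0 < z2.im := h2
    have hu : BAu φ z1.re z1.im = BAu φ z2.re z2.im := by
      rw [← (re_im_BAF z1).1, ← (re_im_BAF z2).1, heq]
    have hv : BAv φ z1.re z1.im = BAv φ z2.re z2.im := by
      rw [← (re_im_BAF z1).2, ← (re_im_BAF z2).2, heq]
    rw [BAu_eq hy1, BAu_eq hy2] at hu
    rw [BAv_eq hy1, BAv_eq hy2] at hv
    have hR : avg φ z1.re (z1.re + z1.im) = avg φ z2.re (z2.re + z2.im) := by linarith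
    have hL : avg φ (z1.re - z1.im) z1.re = avg φ (z2.re - z2.im) z2.re := by linarith
    have h1' : z2.re + z2.im < z1.re + z1.im := by
      by_contra h; push_neg at h
      exact absurd hR (ne_of_lt (avg_lt_avg hc hm hlt.le h (by linarith) (by linarith)
        (Or.inl hlt)))
    have h2' : z2.re - z2.im < z1.re - z1.im := by
      by_contra h; push_neg at h
      exact absurd hL (ne_of_lt (avg_lt_avg hc hm h hlt.le (by linarith) (by linarith)
        (Or.inr hlt)))
    linarith
  intro z1 h1 z2 h2 heq
  have hy1 : 0 < z1.im := h1
  have hy2 : 0 < z2.im := h2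
  rcases lt_trichotomy z1.re z2.re with hlt | heqx | hgt
  · exact absurd hlt (main z1 z2 h1 h2 heq)
  · -- same real part: compare imaginary parts via monotonicity in y
    have hu : BAu φ z1.re z1.im = BAu φ z2.re z2.im := by
      rw [← (re_im_BAF z1).1, ← (re_im_BAF z2).1, heq]
    have hv : BAv φ z1.re z1.im = BAv φ z2.re z2.im := by
      rw [← (re_im_BAF z1).2, ← (re_im_BAF z2).2, heq]
    rw [BAu_eq hy1, BAu_eq hy2, heqx] at hu
    rw [BAv_eq hy1, BAv_eq hy2, heqx] at hv
    have hR : avg φ z2.re (z2.re + z1.im) = avg φ z2.re (z2.re + z2.im) := by linarith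
    rcases lt_trichotomy z1.im z2.im with h | h | h
    · exact absurd hR (ne_of_lt (avg_mono_right hc hm
        (show z2.re < z2.re + z1.im by linarith)
        (show z2.re + z1.im < z2.re + z2.im by linarith)))
    · exact Complex.ext heqx h
    · exact absurd hR.symm (ne_of_lt (avg_mono_right hc hm
        (show z2.re < z2.re + z2.im by linarith)
        (show z2.re + z2.im < z2.re + z1.im by linarith)))
  · exact absurd hgt (main z2 z1 h2 h1 heq.symm)

lemma contAt_avg_right (hc : Continuous φ) (s : ℝ) {y0 : ℝ} (hy0 : y0 ≠ 0) :
    ContinuousAt (fun y => avg φ s (s+y)) y0 := by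
  have hGc : Continuous (G φ) := (contDiff_G hc).continuous
  have : (fun y => avg φ s (s+y)) = fun y => (G φ (s+y) - G φ s)/(s+y-s) := rfl
  rw [this]
  exact ContinuousAt.div
    (((hGc.comp (continuous_const.add continuous_id)).sub continuous_const).continuousAt)
    (((continuous_const.add continuous_id).sub continuous_const).continuousAt)
    (by simpa using hy0)

lemma surjOn_BAF (hc : Continuous φ) (hm : StrictMono φ) (hs : Function.Surjective φ) :
    SurjOn (BAF φ) UpperHalf UpperHalf := by
  have hGc : Continuous (G φ) := (contDiff_G hc).continuous
  intro w hw
  have hwim : 0 < w.im := hw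
  set α := w.re + w.im with hα
  set β := w.re - w.im with hβ
  have hβα : β < α := by rw [hα, hβ]; linarith
  obtain ⟨c, hcα⟩ := hs α
  -- Step A: for every y > 0 there is x ∈ (c-y, c) with avg φ x (x+y) = α
  have hXex : ∀ y : ℝ, ∃ x : ℝ, 0 < y → (c - y < x ∧ x < c ∧ avg φ x (x+y) = α) := by
    intro y
    by_cases hy : 0 < y
    · have hcont : ContinuousOn (fun x => avg φ x (x+y)) (Icc (c-y) c) := by
        apply ContinuousOn.div
        · exact ((hGc.comp (continuous_id.add continuous_const)).sub hGc).continuousOn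
        · exact ((continuous_id.add continuous_const).sub continuous_id).continuousOn
        · intro x _; simpa using ne_of_gt hy
      have hlo : avg φ (c-y) ((c-y)+y) < α := by
        rw [show (c-y)+y = c by ring, ← hcα]
        exact avg_lt hc hm (by linarith)
      have hhi : α < avg φ c (c+y) := by
        rw [← hcα]
        exact lt_avg hc hm (by linarith)
      have := intermediate_value_Ioo (by linarith : c - y ≤ c) hcont
      obtain ⟨x, hx, hfx⟩ := this ⟨hlo, hhi⟩
      exact ⟨x, fun _ => ⟨hx.1, hx.2, hfx⟩⟩
    · exact ⟨0, fun h => absurd h hy⟩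
  choose X hX using hXex
  -- strict monotonicity of x ↦ avg φ x (x+y)
  have hRmono : ∀ y : ℝ, 0 < y → ∀ x1 x2 : ℝ, x1 < x2 →
      avg φ x1 (x1+y) < avg φ x2 (x2+y) := by
    intro y hy x1 x2 hx
    exact avg_lt_avg hc hm hx.le (by linarith) (by linarith) (by linarith) (Or.inl hx)
  -- continuity of X on (0, ∞)
  have hXcont : ContinuousOn X (Ioi 0) := by
    rw [Metric.continuousOn_iff]
    intro y0 hy0 ε hε
    have hy0' : (0:ℝ) < y0 := hy0
    obtain ⟨hx1, hx2, hx3⟩ := hX y0 hy0'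
    have h1 : avg φ (X y0 - ε/2) ((X y0 - ε/2) + y0) < α := by
      rw [← hx3]; exact hRmono y0 hy0' _ _ (by linarith)
    have h2 : α < avg φ (X y0 + ε/2) ((X y0 + ε/2) + y0) := by
      rw [← hx3]; exact hRmono y0 hy0' _ _ (by linarith)
    have hc1 : ∀ᶠ y in 𝓝 y0, avg φ (X y0 - ε/2) ((X y0 - ε/2) + y) < α :=
      (contAt_avg_right hc _ (ne_of_gt hy0')).eventually_lt_const h1
    have hc2 : ∀ᶠ y in 𝓝 y0, α < avg φ (X y0 + ε/2) ((X y0 + ε/2) + y) :=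
      (contAt_avg_right hc _ (ne_of_gt hy0')).eventually_const_lt h2
    obtain ⟨δ, hδ, hball⟩ := Metric.eventually_nhds_iff.mp (hc1.and hc2)
    refine ⟨δ, hδ, fun y hy hdist => ?_⟩
    have hy' : (0:ℝ) < y := hy
    obtain ⟨hb1, hb2⟩ := hball hdist
    obtain ⟨hz1, hz2, hz3⟩ := hX y hy'
    have hlow : X y0 - ε/2 < X y := by
      by_contra h; push_neg at h
      rcases eq_or_lt_of_le h with h' | h'
      · rw [← h'] at hb1; linarith [hz3, hb1]
      · have h4 := hRmono y hy' _ _ h'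
        rw [hz3] at h4; linarith [hb1]
    have hhigh : X y < X y0 + ε/2 := by
      by_contra h; push_neg at h
      rcases eq_or_lt_of_le h with h' | h'
      · rw [h'] at hb2; linarith [hz3, hb2]
      · have h4 := hRmono y hy' _ _ h'
        rw [hz3] at h4; linarith [hb2]
    rw [Real.dist_eq, abs_sub_lt_iff]
    constructor <;> linarith
  -- continuity of g y = avg φ (X y - y) (X y) on (0, ∞)
  have hgcont : ContinuousOn (fun y => avg φ (X y - y) (X y)) (Ioi 0) := by
    have hrw : (fun y => avg φ (X y - y) (X y))
        = fun y => (G φ (X y) - G φ (X y - y))/(X y - (X y - y)) := rfl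
    rw [hrw]
    apply ContinuousOn.div
    · exact (hGc.comp_continuousOn hXcont).sub
        (hGc.comp_continuousOn (hXcont.sub continuousOn_id))
    · exact hXcont.sub (hXcont.sub continuousOn_id)
    · intro y hy
      have : X y - (X y - y) = y := by ring
      rw [this]
      exact ne_of_gt hy
  -- large y endpoint
  obtain ⟨d, hd⟩ := hs (2*β - α)
  have hdc : d < c := by
    have : φ d < φ c := by rw [hd, hcα]; linarith
    exact hm.lt_iff_lt.mp this
  set y2 := 2*(c - d) with hy2def
  have hy2pos : 0 < y2 := by rw [hy2def]; linarith
  have hgy2 : avg φ (X y2 - y2) (X y2) < β := by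
    obtain ⟨hz1, hz2, hz3⟩ := hX y2 hy2pos
    have hsp := avg_half hc (show X y2 - y2 < X y2 by linarith)
    have hmid : ((X y2 - y2) + X y2)/2 = X y2 - y2/2 := by ring
    rw [hmid] at hsp
    have hb1 : avg φ (X y2 - y2) (X y2 - y2/2) ≤ φ (X y2 - y2/2) :=
      avg_le hc hm.monotone (by linarith)
    have hb2 : avg φ (X y2 - y2/2) (X y2) ≤ φ (X y2) :=
      avg_le hc hm.monotone (by linarith)
    have hφ1 : φ (X y2 - y2/2) < φ d := by
      apply hm
      have : c - y2/2 = d := by rw [hy2def]; ring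
      linarith [hz2]
    have hφ2 : φ (X y2) < α := by rw [← hcα]; exact hm hz2
    rw [hsp, hd] at *
    linarith [hφ1, hφ2, hb1, hb2]
  -- small y endpoint
  have hφcont : ContinuousAt (fun y : ℝ => φ (c - 2*y)) 0 := by
    apply hc.continuousAt.comp
    exact (continuous_const.sub (continuous_const.mul continuous_id)).continuousAt
  have hev : ∀ᶠ y in 𝓝 (0:ℝ), β < φ (c - 2*y) := by
    apply hφcont.eventually_const_lt
    simpa [hcα] using hβα
  obtain ⟨δ, hδ, hball⟩ := Metric.eventually_nhds_iff.mp hev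
  set y1 := min (δ/2) (y2/2) with hy1def
  have hy1pos : 0 < y1 := by
    rw [hy1def]; exact lt_min (by linarith) (by linarith)
  have hy12 : y1 ≤ y2 := by
    rw [hy1def]; calc min (δ/2) (y2/2) ≤ y2/2 := min_le_right _ _
      _ ≤ y2 := by linarith
  have hgy1 : β < avg φ (X y1 - y1) (X y1) := by
    obtain ⟨hz1, hz2, hz3⟩ := hX y1 hy1pos
    have hlow : φ (c - 2*y1) ≤ φ (X y1 - y1) := hm.monotone (by linarith)
    have hβlt : β < φ (c - 2*y1) := by
      apply hball
      rw [Real.dist_eq, sub_zero, abs_of_pos hy1pos]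
      calc y1 ≤ δ/2 := by rw [hy1def]; exact min_le_left _ _
        _ < δ := by linarith
    have := le_avg hc hm.monotone (show X y1 - y1 < X y1 by linarith)
    linarith
  -- IVT for g on [y1, y2]
  have hIcc : Icc y1 y2 ⊆ Ioi 0 := fun t ht => lt_of_lt_of_le hy1pos ht.1
  have hIVT := intermediate_value_Icc' hy12 (hgcont.mono hIcc)
  obtain ⟨y, hyIcc, hgy⟩ := hIVT ⟨hgy2.le, hgy1.le⟩
  have hypos : 0 < y := lt_of_lt_of_le hy1pos hyIcc.1
  obtain ⟨hz1, hz2, hz3⟩ := hX y hypos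
  have hgy' : avg φ (X y - y) (X y) = β := hgy
  refine ⟨⟨X y, y⟩, hypos, ?_⟩
  have hre : (⟨X y, y⟩ : ℂ).re = X y := rfl
  have him : (⟨X y, y⟩ : ℂ).im = y := rfl
  apply Complex.ext
  · rw [(re_im_BAF _).1, hre, him, BAu_eq hypos, hz3, hgy', hα, hβ]; ring
  · rw [(re_im_BAF _).2, hre, him, BAv_eq hypos, hz3, hgy', hα, hβ]; ring

end topol

/-! ### Boundary behaviour -/

section boundary
variable {φ : ℝ → ℝ}

lemma dist_BAF_le (hc : Continuous φ) (hm : StrictMono φ) (x0 : ℝ) {z : ℂ}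
    (hz : z ∈ UpperHalf) :
    dist (BAF φ z) ((φ x0 : ℝ) : ℂ)
      ≤ 2*(|φ (z.re+z.im) - φ x0| + |φ (z.re-z.im) - φ x0|) := by
  have hy : 0 < z.im := hz
  have hR1 : avg φ z.re (z.re+z.im) ≤ φ (z.re+z.im) := avg_le hc hm.monotone (by linarith)
  have hR2 : φ z.re ≤ avg φ z.re (z.re+z.im) := le_avg hc hm.monotone (by linarith)
  have hL1 : φ (z.re-z.im) ≤ avg φ (z.re-z.im) z.re := le_avg hc hm.monotone (by linarith)
  have hL2 : avg φ (z.re-z.im) z.re ≤ φ z.re := avg_le hc hm.monotone (by linarith)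
  have hmono1 : φ (z.re-z.im) ≤ φ z.re := hm.monotone (by linarith)
  have hmono2 : φ z.re ≤ φ (z.re+z.im) := hm.monotone (by linarith)
  have hv0 : 0 < BAv φ z.re z.im := BAv_pos hc hm hy
  have huEq := BAu_eq (φ := φ) (x := z.re) hy
  have hvEq := BAv_eq (φ := φ) (x := z.re) hy
  have hu_ub : BAu φ z.re z.im ≤ φ (z.re+z.im) := by rw [huEq]; linarith
  have hu_lb : φ (z.re-z.im) ≤ BAu φ z.re z.im := by rw [huEq]; linarith
  have hv_ub : BAv φ z.re z.im ≤ (φ (z.re+z.im) - φ (z.re-z.im))/2 := by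
    rw [hvEq]; linarith
  rw [Complex.dist_eq]
  have hsplit : BAF φ z - ((φ x0 : ℝ) : ℂ)
      = ↑(BAu φ z.re z.im - φ x0) + ↑(BAv φ z.re z.im) * Complex.I := by
    simp only [BAF]; push_cast; ring
  rw [hsplit]
  have hAnn : (0:ℝ) ≤ |φ (z.re+z.im) - φ x0| := abs_nonneg _
  have hBnn : (0:ℝ) ≤ |φ (z.re-z.im) - φ x0| := abs_nonneg _
  have habs1 : |BAu φ z.re z.im - φ x0| ≤ |φ (z.re+z.im) - φ x0| + |φ (z.re-z.im) - φ x0| := by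
    rw [abs_le]
    constructor
    · linarith [neg_abs_le (φ (z.re-z.im) - φ x0)]
    · linarith [le_abs_self (φ (z.re+z.im) - φ x0)]
  have habs2 : |BAv φ z.re z.im|
      ≤ (|φ (z.re+z.im) - φ x0| + |φ (z.re-z.im) - φ x0|)/2 := by
    rw [abs_of_pos hv0]
    have h1 := le_abs_self (φ (z.re+z.im) - φ x0)
    have h2 := neg_abs_le (φ (z.re-z.im) - φ x0)
    linarith
  calc ‖↑(BAu φ z.re z.im - φ x0) + ↑(BAv φ z.re z.im) * Complex.I‖
      ≤ ‖(↑(BAu φ z.re z.im - φ x0) : ℂ)‖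
        + ‖↑(BAv φ z.re z.im) * Complex.I‖ := norm_add_le _ _
    _ = |BAu φ z.re z.im - φ x0| + |BAv φ z.re z.im| := by
        rw [norm_mul]; simp [← Complex.ofReal_sub, Complex.norm_real]
    _ ≤ 2*(|φ (z.re+z.im) - φ x0| + |φ (z.re-z.im) - φ x0|) := by linarith

lemma tendsto_BAF_boundary (hc : Continuous φ) (hm : StrictMono φ) (x0 : ℝ) :
    Tendsto (BAF φ) (𝓝[UpperHalf] ((x0:ℝ):ℂ)) (𝓝 ((φ x0 : ℝ) : ℂ)) := by
  rw [tendsto_iff_dist_tendsto_zero]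
  have hH : Continuous (fun z : ℂ => 2*(|φ (z.re+z.im) - φ x0| + |φ (z.re-z.im) - φ x0|)) := by
    apply continuous_const.mul
    apply Continuous.add
    · exact ((hc.comp (Complex.continuous_re.add Complex.continuous_im)).sub
        continuous_const).abs
    · exact ((hc.comp (Complex.continuous_re.sub Complex.continuous_im)).sub
        continuous_const).abs
  have hH0 : Tendsto (fun z : ℂ => 2*(|φ (z.re+z.im) - φ x0| + |φ (z.re-z.im) - φ x0|))
      (𝓝[UpperHalf] ((x0:ℝ):ℂ)) (𝓝 0) := by
    apply tendsto_nhdsWithin_of_tendsto_nhds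
    have := hH.tendsto ((x0:ℝ):ℂ)
    simpa using this
  apply squeeze_zero' (Filter.Eventually.of_forall fun z => dist_nonneg) ?_ hH0
  filter_upwards [self_mem_nhdsWithin] with z hz
  exact dist_BAF_le hc hm x0 hz

/-! ### Behaviour at infinity -/

lemma BAv_ge (hc : Continuous φ) (hm : StrictMono φ) {k : ℝ} (hk : 1 ≤ k) (hqs : QS k φ)
    {x y : ℝ} (hy : 0 < y) :
    (φ (x+y) - φ (x-y))/(4*(k+1)) ≤ BAv φ x y := by
  obtain ⟨_, _, hp1, _⟩ := right_bounds hc hm hk hqs x y hy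
  obtain ⟨_, _, hq1, _⟩ := left_bounds hc hm hk hqs x y hy
  rw [BAv_eq hy]
  have hrw : ((φ (x+y) - φ x)/(2*(k+1)) + (φ x - φ (x-y))/(2*(k+1)))/2
      = (φ (x+y) - φ (x-y))/(4*(k+1)) := by
    rw [← add_div, div_div, show (2*(k+1))*2 = 4*(k+1) by ring,
      show (φ (x+y) - φ x) + (φ x - φ (x-y)) = φ (x+y) - φ (x-y) by ring]
  rw [← hrw]
  linarith

lemma tendsInfty_BAF (hc : Continuous φ) (hm : StrictMono φ) (hs : Function.Surjective φ)
    {k : ℝ} (hk : 1 ≤ k) (hqs : QS k φ) :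
    ∀ R : ℝ, 0 < R → ∃ S : ℝ, 0 < S ∧ ∀ z ∈ UpperHalf, S ≤ ‖z‖
      → R ≤ ‖BAF φ z‖ := by
  intro R hR
  have hk1 : (0:ℝ) < 4*(k+1) := by linarith
  obtain ⟨cp, hcp⟩ := hs R
  obtain ⟨cm, hcm⟩ := hs (-R)
  set M := max cp (-cm) with hM
  have hφM : R ≤ φ M := by rw [← hcp]; exact hm.monotone (le_max_left _ _)
  have hφM' : φ (-M) ≤ -R := by
    have hMm : -M ≤ cm := by
      have := le_max_right cp (-cm)
      rw [hM]; linarith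
    rw [← hcm]; exact hm.monotone hMm
  set T := R*(4*(k+1)) with hT
  obtain ⟨e1, he1⟩ := hs (φ M + T)
  obtain ⟨e2, he2⟩ := hs (φ (-M) - T)
  set Y := max (max e1 (-e2)) 1 with hY
  have hYpos : (0:ℝ) < Y := lt_of_lt_of_le zero_lt_one (le_max_right _ _)
  have hYe1 : e1 ≤ Y := le_trans (le_max_left _ _) (le_max_left _ _)
  have hYe2 : -Y ≤ e2 := by
    have : -e2 ≤ Y := le_trans (le_max_right _ _) (le_max_left _ _)
    linarith
  refine ⟨2*Y + |M| + 1, by positivity, ?_⟩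
  intro z hz habs
  have hy : 0 < z.im := hz
  set x := z.re with hx
  set y := z.im with hy'
  have hR1 : avg φ x (x+y) ≤ φ (x+y) := avg_le hc hm.monotone (by linarith)
  have hR2 : φ x ≤ avg φ x (x+y) := le_avg hc hm.monotone (by linarith)
  have hL1 : φ (x-y) ≤ avg φ (x-y) x := le_avg hc hm.monotone (by linarith)
  have hL2 : avg φ (x-y) x ≤ φ x := avg_le hc hm.monotone (by linarith)
  have huEq := BAu_eq (φ := φ) (x := x) hy
  have hreF : (BAF φ z).re = BAu φ x y := (re_im_BAF z).1
  have himF : (BAF φ z).im = BAv φ x y := (re_im_BAF z).2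
  rcases le_or_gt M (x - y) with hcase1 | hcase1
  · -- far right: the real part is at least R
    have hu : R ≤ BAu φ x y := by
      have h1 : φ M ≤ φ (x-y) := hm.monotone hcase1
      rw [huEq]
      linarith
    calc R ≤ BAu φ x y := hu
      _ ≤ |(BAF φ z).re| := by rw [hreF]; exact le_abs_self _
      _ ≤ ‖BAF φ z‖ := Complex.abs_re_le_norm _
  rcases le_or_gt (x + y) (-M) with hcase2 | hcase2
  · -- far left: the real part is at most -R
    have hu : BAu φ x y ≤ -R := by
      have h1 : φ (x+y) ≤ φ (-M) := hm.monotone hcase2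
      have h2 : φ x ≤ φ (x+y) := hm.monotone (by linarith)
      rw [huEq]
      linarith
    calc R ≤ -(BAF φ z).re := by rw [hreF]; linarith
      _ ≤ |(BAF φ z).re| := neg_le_abs _
      _ ≤ ‖BAF φ z‖ := Complex.abs_re_le_norm _
  · -- middle region: the imaginary part is large
    have hxb : |x| < y + |M| := by
      have h1 : x < y + M := by linarith
      have h2 : -(y + M) < x := by linarith
      rw [abs_lt]
      constructor <;>
      · have h3 : M ≤ |M| := le_abs_self _
        have h4 : -M ≤ |M| := neg_le_abs _
        linarith
    have hzb : ‖z‖ ≤ |x| + y := by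
      have := Complex.norm_le_abs_re_add_abs_im z
      rwa [← hx, ← hy', abs_of_pos hy] at this
    have hyY : Y ≤ y := by linarith
    have hab : T ≤ φ (x+y) - φ (x-y) := by
      rcases le_or_gt 0 x with hx0 | hx0
      · have h1 : φ M + T ≤ φ y := by
          rw [← he1]; exact hm.monotone (by linarith)
        have h2 : φ y ≤ φ (x+y) := hm.monotone (by linarith)
        have h3 : φ (x-y) ≤ φ M := hm.monotone (by linarith)
        linarith
      · have h1 : φ (x-y) ≤ φ (-Y) := hm.monotone (by linarith)
        have h2 : φ (-Y) ≤ φ (-M) - T := by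
          rw [← he2]; exact hm.monotone hYe2
        have h3 : φ (-M) ≤ φ (x+y) := hm.monotone (by linarith)
        linarith
    have hv : R ≤ BAv φ x y := by
      have h1 := BAv_ge hc hm hk hqs (x := x) hy
      have h2 : T/(4*(k+1)) ≤ (φ (x+y) - φ (x-y))/(4*(k+1)) :=
        (div_le_div_iff_of_pos_right hk1).mpr hab
      have h3 : T/(4*(k+1)) = R := by rw [hT]; field_simp
      linarith
    calc R ≤ BAv φ x y := hv
      _ ≤ |(BAF φ z).im| := by rw [himF]; exact le_abs_self _
      _ ≤ ‖BAF φ z‖ := Complex.abs_im_le_norm _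

end boundary

end BA

/-- Every `k`-quasi-symmetric strictly increasing homeomorphism of `ℝ` extends
to a `K`-quasi-conformal orientation-preserving `C¹` diffeomorphism of the upper half-plane,
where `K` depends only on `k`. -/
theorem quasisymmetric_extends_to_qc :
    ∀ k : ℝ, 1 ≤ k → ∃ K : ℝ, 1 ≤ K ∧
      ∀ φ : ℝ → ℝ, IncrHomeo φ → QuasiSym k φ →
        ∃ F : ℂ → ℂ, IsQCDiffeo K F ∧
          (∀ x : ℝ, Tendsto F (nhdsWithin (x : ℂ) UpperHalf) (nhds ((φ x : ℝ) : ℂ))) ∧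
          TendsInfty F := by
  intro k hk
  refine ⟨4*k*(k+1), by nlinarith, fun φ hφ hqs => ?_⟩
  obtain ⟨hm, hc, hs⟩ := hφ
  have hqs' : BA.QS k φ := hqs
  refine ⟨BA.BAF φ, ⟨?_, BA.injOn_BAF hc hm, BA.surjOn_BAF hc hm hs, BA.contDiffOn_BAF hc,
    fun z hz => (BA.qc_at hc hm hk hqs' hz).1, fun z hz => (BA.qc_at hc hm hk hqs' hz).2⟩,
    fun x => BA.tendsto_BAF_boundary hc hm x,
    fun R hR => BA.tendsInfty_BAF hc hm hs hk hqs' R hR⟩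
  intro z hz
  show 0 < (BA.BAF φ z).im
  rw [(BA.re_im_BAF z).2]
  exact BA.BAv_pos hc hm hz

end
end

section
/- For every M ≥ 1 there exists k ≥ 1 such that: if φ : ℝ → ℝ is a strictly increasing homeomorphism with the property that for every quadruple (a,b,c,d) of pairwise distinct real numbers with cr(a,b,c,d) = −1 one has −M ≤ cr(φ(a), φ(b), φ(c), φ(d)) ≤ −1/M, then φ is k-quasi-symmetric. -/
open Complex Set Filter Topology

noncomputable section

/-- Conversely, if a strictly increasing homeomorphism of `ℝ` sends every
symmetric quadruple (cross-ratio `−1`) to a quadruple of cross-ratio in `[−M, −1/M]`, then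
it is `k`-quasi-symmetric with `k` depending only on `M`. -/
theorem crossratio_bound_implies_quasisymmetric (M : ℝ) (hM : 1 ≤ M) :
    ∃ k : ℝ, 1 ≤ k ∧
      ∀ φ : ℝ → ℝ, IncrHomeo φ →
        (∀ a b c d : ℝ, a ≠ b → a ≠ c → a ≠ d → b ≠ c → b ≠ d → c ≠ d →
          crossRatio a b c d = -1 →
            -M ≤ crossRatio (φ a) (φ b) (φ c) (φ d) ∧
              crossRatio (φ a) (φ b) (φ c) (φ d) ≤ -(1 / M)) →
        QuasiSym k φ := by
  have hM0 : (0:ℝ) < M := lt_of_lt_of_le one_pos hM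
  refine ⟨M, hM, ?_⟩
  intro φ hφ h
  obtain ⟨hmono, hcont, hsurj⟩ := hφ
  -- Step 1: right increments at scales below t are bounded by M times the left increment.
  have stepR : ∀ x t u : ℝ, 0 < t → 0 < u → u < t →
      φ (x + u) - φ x ≤ M * (φ x - φ (x - t)) := by
    intro x t u ht hu hut
    have htu : 0 < t - u := by linarith
    set s : ℝ := 2 * u * t / (t - u) with hs
    have hs0 : 0 < s := by
      apply div_pos _ htu; nlinarith
    have hus : u < s := by
      rw [hs, lt_div_iff₀ htu]; nlinarith
    have hrel : u * (s + 2 * t) = s * t := by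
      rw [hs]; field_simp; ring
    have hcr : crossRatio (x - t) x (x + s) (x + u) = -1 := by
      unfold crossRatio
      rw [div_eq_iff (by intro hz; rcases mul_eq_zero.1 hz with h1 | h1 <;> nlinarith)]
      linear_combination hrel
    obtain ⟨hlow, _⟩ := h (x - t) x (x + s) (x + u)
      (by intro hz; nlinarith [sub_eq_zero.2 hz])
      (by intro hz; nlinarith [sub_eq_zero.2 hz])
      (by intro hz; nlinarith [sub_eq_zero.2 hz])
      (by intro hz; nlinarith [sub_eq_zero.2 hz])
      (by intro hz; nlinarith [sub_eq_zero.2 hz])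
      (by intro hz; nlinarith [sub_eq_zero.2 hz]) hcr
    have hab : φ (x - t) < φ x := hmono (by linarith)
    have hbd : φ x < φ (x + u) := hmono (by linarith)
    have hdc : φ (x + u) < φ (x + s) := hmono (by linarith)
    unfold crossRatio at hlow
    have hden : (φ x - φ (x - t)) * (φ (x + u) - φ (x + s)) < 0 :=
      mul_neg_of_pos_of_neg (by linarith) (by linarith)
    rw [le_div_iff_of_neg hden] at hlow
    -- hlow : (φ(x+s) - φ(x-t)) * (φ(x+u) - φ x) ≤ -M * ((φ x - φ(x-t)) * (φ(x+u) - φ(x+s)))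
    nlinarith [mul_pos (sub_pos.2 (lt_trans hbd hdc)) (sub_pos.2 hbd),
      mul_pos (sub_pos.2 hab) (sub_pos.2 hbd),
      mul_nonneg (le_of_lt hM0) (mul_nonneg (le_of_lt (sub_pos.2 hab)) (le_of_lt (sub_pos.2 hbd)))]
  -- Step 2: left increments at scales below t are bounded by M times the right increment.
  have stepL : ∀ x t u : ℝ, 0 < t → 0 < u → u < t →
      φ x - φ (x - u) ≤ M * (φ (x + t) - φ x) := by
    intro x t u ht hu hut
    have htu : 0 < t - u := by linarith
    set s : ℝ := 2 * u * t / (t - u) with hs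
    have hs0 : 0 < s := by
      apply div_pos _ htu; nlinarith
    have hus : u < s := by
      rw [hs, lt_div_iff₀ htu]; nlinarith
    have hrel : u * (s + 2 * t) = s * t := by
      rw [hs]; field_simp; ring
    have hcr : crossRatio (x - s) (x - u) (x + t) x = -1 := by
      unfold crossRatio
      rw [div_eq_iff (by intro hz; rcases mul_eq_zero.1 hz with h1 | h1 <;> nlinarith)]
      linear_combination hrel
    obtain ⟨hlow, _⟩ := h (x - s) (x - u) (x + t) x
      (by intro hz; nlinarith [sub_eq_zero.2 hz])
      (by intro hz; nlinarith [sub_eq_zero.2 hz])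
      (by intro hz; nlinarith [sub_eq_zero.2 hz])
      (by intro hz; nlinarith [sub_eq_zero.2 hz])
      (by intro hz; nlinarith [sub_eq_zero.2 hz])
      (by intro hz; nlinarith [sub_eq_zero.2 hz]) hcr
    have hab : φ (x - s) < φ (x - u) := hmono (by linarith)
    have hbd : φ (x - u) < φ x := hmono (by linarith)
    have hdc : φ x < φ (x + t) := hmono (by linarith)
    unfold crossRatio at hlow
    have hden : (φ (x - u) - φ (x - s)) * (φ x - φ (x + t)) < 0 :=
      mul_neg_of_pos_of_neg (by linarith) (by linarith)
    rw [le_div_iff_of_neg hden] at hlow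
    nlinarith [mul_pos (sub_pos.2 (lt_trans hab hbd)) (sub_pos.2 hbd),
      mul_pos (sub_pos.2 hdc) (sub_pos.2 hbd),
      mul_nonneg (le_of_lt hM0) (mul_nonneg (le_of_lt (sub_pos.2 hdc)) (le_of_lt (sub_pos.2 hbd)))]
  -- pass to the limit u → t⁻ using continuity of φ
  have keyR : ∀ x t : ℝ, 0 < t → φ (x + t) - φ x ≤ M * (φ x - φ (x - t)) := by
    intro x t ht
    have hcont' : Tendsto (fun u : ℝ => φ (x + u) - φ x) (nhdsWithin t (Set.Iio t))
        (nhds (φ (x + t) - φ x)) := by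
      apply Tendsto.mono_left _ nhdsWithin_le_nhds
      exact (((hcont.comp (continuous_const.add continuous_id)).sub
        continuous_const).tendsto t)
    refine le_of_tendsto hcont' ?_
    filter_upwards [Ioo_mem_nhdsLT_of_mem (Set.mem_Ioc.2 ⟨ht, le_refl t⟩)] with u hu
    exact stepR x t u ht hu.1 hu.2
  have keyL : ∀ x t : ℝ, 0 < t → φ x - φ (x - t) ≤ M * (φ (x + t) - φ x) := by
    intro x t ht
    have hcont' : Tendsto (fun u : ℝ => φ x - φ (x - u)) (nhdsWithin t (Set.Iio t))
        (nhds (φ x - φ (x - t))) := by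
      apply Tendsto.mono_left _ nhdsWithin_le_nhds
      exact ((continuous_const.sub
        (hcont.comp (continuous_const.sub continuous_id))).tendsto t)
    refine le_of_tendsto hcont' ?_
    filter_upwards [Ioo_mem_nhdsLT_of_mem (Set.mem_Ioc.2 ⟨ht, le_refl t⟩)] with u hu
    exact stepL x t u ht hu.1 hu.2
  -- conclude quasi-symmetry with constant M
  intro x t ht
  have hL : 0 < φ x - φ (x - t) := sub_pos.2 (hmono (by linarith))
  have hR : 0 < φ (x + t) - φ x := sub_pos.2 (hmono (by linarith))
  have h1 := keyR x t ht
  have h2 := keyL x t ht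
  constructor
  · rw [div_le_div_iff₀ hM0 hL]
    linarith
  · rw [div_le_iff₀ hL]
    linarith

end
end

section
/- Let Γ be a subgroup of SL(2,ℝ) acting cocompactly on ℍ, i.e. there exists a compact set F ⊆ ℍ with ⋃_{g ∈ Γ} g•F = ℍ. Let u : ℍ → ℝ be a smooth function which is Γ-invariant: u(g•z) = u(z) for all g ∈ Γ and z ∈ ℍ. Then for every p ≥ 1 there exists M_p > 0 such that (Im z)^p·‖Dᵖu(z)‖ ≤ M_p for all z ∈ ℍ; that is, all derivatives of u are bounded with respect to the hyperbolic metric. -/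
open Complex Set Filter Topology

noncomputable section

lemma isOpen_upperHalf : IsOpen UpperHalf :=
  isOpen_lt continuous_const Complex.continuous_im

lemma uhp_udR : UniqueDiffOn ℝ UpperHalf := isOpen_upperHalf.uniqueDiffOn
lemma uhp_udC : UniqueDiffOn ℂ UpperHalf := isOpen_upperHalf.uniqueDiffOn

lemma sl_det (g : Matrix.SpecialLinearGroup (Fin 2) ℝ) :
    (g : Matrix (Fin 2) (Fin 2) ℝ) 0 0 * (g : Matrix (Fin 2) (Fin 2) ℝ) 1 1 -
      (g : Matrix (Fin 2) (Fin 2) ℝ) 0 1 * (g : Matrix (Fin 2) (Fin 2) ℝ) 1 0 = 1 := by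
  have h := g.2
  rwa [Matrix.det_fin_two] at h

lemma moebius_denom_ne (g : Matrix.SpecialLinearGroup (Fin 2) ℝ) {z : ℂ} (hz : 0 < z.im) :
    ((g : Matrix (Fin 2) (Fin 2) ℝ) 1 0 : ℂ) * z + ((g : Matrix (Fin 2) (Fin 2) ℝ) 1 1 : ℂ) ≠ 0 := by
  set c := (g : Matrix (Fin 2) (Fin 2) ℝ) 1 0
  set d := (g : Matrix (Fin 2) (Fin 2) ℝ) 1 1
  intro h
  have him := congrArg Complex.im h
  simp [Complex.add_im, Complex.mul_im] at him
  have hc : c = 0 := by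
    rcases him with h' | h'
    · exact h'
    · exact absurd h' hz.ne'
  have hd : d = 0 := by
    rw [hc] at h
    simpa using h
  have := sl_det g
  rw [show (g : Matrix (Fin 2) (Fin 2) ℝ) 1 0 = c from rfl] at this
  rw [show (g : Matrix (Fin 2) (Fin 2) ℝ) 1 1 = d from rfl] at this
  rw [hc, hd] at this
  simp at this

lemma moebius_im (g : Matrix.SpecialLinearGroup (Fin 2) ℝ) {z : ℂ} (hz : 0 < z.im) :
    (moebius g z).im = z.im / Complex.normSq
      (((g : Matrix (Fin 2) (Fin 2) ℝ) 1 0 : ℂ) * z + ((g : Matrix (Fin 2) (Fin 2) ℝ) 1 1 : ℂ)) := by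
  have hdet := sl_det g
  set a := (g : Matrix (Fin 2) (Fin 2) ℝ) 0 0
  set b := (g : Matrix (Fin 2) (Fin 2) ℝ) 0 1
  set c := (g : Matrix (Fin 2) (Fin 2) ℝ) 1 0
  set d := (g : Matrix (Fin 2) (Fin 2) ℝ) 1 1
  rw [moebius, Complex.div_im, div_sub_div_same]
  congr 1
  simp only [Complex.add_im, Complex.add_re, Complex.mul_im, Complex.mul_re,
    Complex.ofReal_re, Complex.ofReal_im]
  ring_nf
  nlinarith [hdet]

lemma moebius_mem (g : Matrix.SpecialLinearGroup (Fin 2) ℝ) {z : ℂ} (hz : z ∈ UpperHalf) :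
    moebius g z ∈ UpperHalf := by
  have h := moebius_im g hz
  have hne := moebius_denom_ne g hz
  have : 0 < Complex.normSq (((g : Matrix (Fin 2) (Fin 2) ℝ) 1 0 : ℂ) * z +
      ((g : Matrix (Fin 2) (Fin 2) ℝ) 1 1 : ℂ)) := Complex.normSq_pos.2 hne
  have : 0 < (moebius g z).im := by rw [h]; exact div_pos hz this
  exact this

lemma moebius_coe (g : Matrix.SpecialLinearGroup (Fin 2) ℝ) (Z : UpperHalfPlane) :
    moebius g (Z : ℂ) = ((g • Z : UpperHalfPlane) : ℂ) := by
  rw [UpperHalfPlane.specialLinearGroup_apply]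
  simp [moebius]

lemma hasDerivAt_affine (c d z : ℂ) : HasDerivAt (fun w => c * w + d) c z := by
  simpa using ((hasDerivAt_id z).const_mul c).add_const d

lemma iteratedDeriv_inv_sq (c d : ℂ) : ∀ (j : ℕ) {z : ℂ}, c * z + d ≠ 0 →
    iteratedDeriv j (fun w => ((c * w + d)⁻¹) ^ 2) z
      = (-1) ^ j * (Nat.factorial (j+1) : ℂ) * c ^ j * ((c * z + d)⁻¹) ^ (j + 2) := by
  intro j
  induction j with
  | zero => intro z hz; simp
  | succ j ih =>
    intro z hz
    rw [iteratedDeriv_succ]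
    have hopen : IsOpen {w : ℂ | c * w + d ≠ 0} :=
      isOpen_ne.preimage (by continuity)
    have hev : iteratedDeriv j (fun w => ((c * w + d)⁻¹) ^ 2)
        =ᶠ[𝓝 z] fun w => (-1) ^ j * (Nat.factorial (j+1) : ℂ) * c ^ j * ((c * w + d)⁻¹) ^ (j + 2) :=
      eventually_of_mem (hopen.mem_nhds hz) (fun w hw => ih hw)
    rw [hev.deriv_eq]
    have h2 : HasDerivAt (fun w => (c * w + d)⁻¹) (-c / (c * z + d) ^ 2) z :=
      (hasDerivAt_affine c d z).inv hz
    have h3 : HasDerivAt (fun w => ((c * w + d)⁻¹) ^ (j + 2))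
        ((j + 2 : ℕ) * ((c * z + d)⁻¹) ^ (j + 1) * (-c / (c * z + d) ^ 2)) z := h2.pow (j + 2)
    have h4 := h3.const_mul ((-1) ^ j * (Nat.factorial (j+1) : ℂ) * c ^ j)
    rw [h4.deriv]
    rw [Nat.factorial_succ (j + 1)]
    push_cast
    simp only [div_eq_mul_inv, ← inv_pow]
    ring

lemma deriv_moebius_eq (g : Matrix.SpecialLinearGroup (Fin 2) ℝ) {z : ℂ}
    (hz : ((g : Matrix (Fin 2) (Fin 2) ℝ) 1 0 : ℂ) * z + ((g : Matrix (Fin 2) (Fin 2) ℝ) 1 1 : ℂ) ≠ 0) :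
    HasDerivAt (moebius g)
      (((((g : Matrix (Fin 2) (Fin 2) ℝ) 1 0 : ℂ) * z + ((g : Matrix (Fin 2) (Fin 2) ℝ) 1 1 : ℂ))⁻¹) ^ 2) z := by
  have hdet := sl_det g
  set a := (g : Matrix (Fin 2) (Fin 2) ℝ) 0 0
  set b := (g : Matrix (Fin 2) (Fin 2) ℝ) 0 1
  set c := (g : Matrix (Fin 2) (Fin 2) ℝ) 1 0
  set d := (g : Matrix (Fin 2) (Fin 2) ℝ) 1 1
  have h := (hasDerivAt_affine (a : ℂ) (b : ℂ) z).div (hasDerivAt_affine (c : ℂ) (d : ℂ) z) hz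
  refine h.congr_deriv ?_
  have hdetC : (a : ℂ) * d - (b : ℂ) * c = 1 := by exact_mod_cast hdet
  have h1 : (a : ℂ) * ((c : ℂ) * z + (d : ℂ)) - ((a : ℂ) * z + (b : ℂ)) * (c : ℂ) = 1 := by
    linear_combination hdetC
  rw [h1, inv_pow, one_div]

lemma iteratedDeriv_moebius (g : Matrix.SpecialLinearGroup (Fin 2) ℝ) (j : ℕ) {z : ℂ}
    (hz : ((g : Matrix (Fin 2) (Fin 2) ℝ) 1 0 : ℂ) * z + ((g : Matrix (Fin 2) (Fin 2) ℝ) 1 1 : ℂ) ≠ 0) :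
    iteratedDeriv (j + 1) (moebius g) z
      = (-1) ^ j * (Nat.factorial (j+1) : ℂ) * ((g : Matrix (Fin 2) (Fin 2) ℝ) 1 0 : ℂ) ^ j *
        (((((g : Matrix (Fin 2) (Fin 2) ℝ) 1 0 : ℂ) * z + ((g : Matrix (Fin 2) (Fin 2) ℝ) 1 1 : ℂ))⁻¹) ^ (j + 2)) := by
  set c := (g : Matrix (Fin 2) (Fin 2) ℝ) 1 0
  set d := (g : Matrix (Fin 2) (Fin 2) ℝ) 1 1
  rw [iteratedDeriv_succ']
  have hopen : IsOpen {w : ℂ | (c : ℂ) * w + (d : ℂ) ≠ 0} := isOpen_ne.preimage (by continuity)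
  have hev : deriv (moebius g) =ᶠ[𝓝 z] fun w => (((c : ℂ) * w + (d : ℂ))⁻¹) ^ 2 :=
    eventually_of_mem (hopen.mem_nhds hz) (fun w hw => (deriv_moebius_eq g hw).deriv)
  rw [hev.iteratedDeriv_eq j]
  exact iteratedDeriv_inv_sq (c : ℂ) (d : ℂ) j hz

lemma moebius_contDiffOn (g : Matrix.SpecialLinearGroup (Fin 2) ℝ) :
    ContDiffOn ℂ (⊤ : ℕ∞) (moebius g) UpperHalf := by
  apply ContDiffOn.div
  · exact ((contDiff_const.mul contDiff_id).add contDiff_const).contDiffOn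
  · exact ((contDiff_const.mul contDiff_id).add contDiff_const).contDiffOn
  · intro z hz
    exact moebius_denom_ne g hz

lemma norm_itFDW_eq_iteratedDeriv (f : ℂ → ℂ) (hf : ContDiffOn ℂ (⊤ : ℕ∞) f UpperHalf)
    (n : ℕ) {z : ℂ} (hz : z ∈ UpperHalf) :
    ‖iteratedFDerivWithin ℝ n f UpperHalf z‖ = ‖iteratedDeriv n f z‖ := by
  have hT := (hf.ftaylorSeriesWithin uhp_udC).restrictScalars ℝ
  have h1 := hT.eq_iteratedFDerivWithin_of_uniqueDiffOn (m := n)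
    (by exact_mod_cast le_top) uhp_udR hz
  rw [← h1]
  have h2 : (FormalMultilinearSeries.restrictScalars ℝ (ftaylorSeriesWithin ℂ f UpperHalf z)) n
      = ContinuousMultilinearMap.restrictScalars ℝ (iteratedFDerivWithin ℂ n f UpperHalf z) := rfl
  rw [h2, ContinuousMultilinearMap.norm_restrictScalars,
    iteratedFDerivWithin_of_isOpen n isOpen_upperHalf hz,
    norm_iteratedFDeriv_eq_norm_iteratedDeriv]

lemma moebius_deriv_bound (g : Matrix.SpecialLinearGroup (Fin 2) ℝ) {z : ℂ}
    (hz : z ∈ UpperHalf) (i : ℕ) (hi : 1 ≤ i) :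
    ‖iteratedFDerivWithin ℝ i (moebius g) UpperHalf z‖
      ≤ (Nat.factorial i : ℝ) * (moebius g z).im / z.im ^ i := by
  obtain ⟨j, rfl⟩ : ∃ j, i = j + 1 := ⟨i - 1, by omega⟩
  set c := (g : Matrix (Fin 2) (Fin 2) ℝ) 1 0 with hc
  set d := (g : Matrix (Fin 2) (Fin 2) ℝ) 1 1 with hd
  have hzim : 0 < z.im := hz
  have hne : (c : ℂ) * z + (d : ℂ) ≠ 0 := moebius_denom_ne g hzim
  rw [norm_itFDW_eq_iteratedDeriv _ (moebius_contDiffOn g) _ hz,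
    iteratedDeriv_moebius g j hne]
  set r := ‖(c : ℂ) * z + (d : ℂ)‖ with hr
  have hrpos : 0 < r := norm_pos_iff.2 hne
  set N := (Nat.factorial (j + 1) : ℝ) with hN
  have hNpos : 0 < N := by rw [hN]; positivity
  have him : (moebius g z).im = z.im / r ^ 2 := by
    rw [moebius_im g hzim, ← hc, ← hd, hr, Complex.sq_norm]
  have hcr : |c| * z.im ≤ r := by
    have h1 : (c * z.im) ^ 2 ≤ Complex.normSq ((c : ℂ) * z + (d : ℂ)) := by
      rw [Complex.normSq_apply]
      simp only [Complex.add_re, Complex.add_im, Complex.mul_re, Complex.mul_im,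
        Complex.ofReal_re, Complex.ofReal_im]
      nlinarith [sq_nonneg (c * z.re + d)]
    have h2 : Complex.normSq ((c : ℂ) * z + (d : ℂ)) = r ^ 2 := by
      rw [hr, Complex.sq_norm]
    have h3 := Real.sqrt_le_sqrt (h1.trans_eq h2)
    rw [Real.sqrt_sq_eq_abs, Real.sqrt_sq hrpos.le] at h3
    calc |c| * z.im = |c * z.im| := by rw [abs_mul, abs_of_pos hzim]
    _ ≤ r := h3
  have hnorm : ‖(-1 : ℂ) ^ j * (Nat.factorial (j + 1) : ℂ) * (c : ℂ) ^ j *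
      ((((c : ℂ) * z + (d : ℂ))⁻¹) ^ (j + 2))‖ = N * |c| ^ j * (r⁻¹) ^ (j + 2) := by
    simp [norm_mul, norm_pow, norm_inv, Complex.norm_natCast,
      Complex.norm_real, Real.norm_eq_abs, ← hr, hN]
  rw [hnorm, him]
  have key : |c| ^ j * z.im ^ j ≤ r ^ j := by
    calc |c| ^ j * z.im ^ j = (|c| * z.im) ^ j := (mul_pow _ _ _).symm
    _ ≤ r ^ j := pow_le_pow_left₀ (by positivity) hcr j
  have lhs_eq : N * |c| ^ j * (r⁻¹) ^ (j + 2) = N * |c| ^ j / r ^ (j + 2) := by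
    rw [inv_pow]; ring
  have rhs_eq : N * (z.im / r ^ 2) / z.im ^ (j + 1) = N / (r ^ 2 * z.im ^ j) := by
    field_simp [pow_succ]
    ring
  rw [lhs_eq, rhs_eq, div_le_div_iff₀ (by positivity) (by positivity)]
  have hkey2 := mul_le_mul_of_nonneg_left key (show (0:ℝ) ≤ N * r ^ 2 by positivity)
  calc N * |c| ^ j * (r ^ 2 * z.im ^ j) = (N * r ^ 2) * (|c| ^ j * z.im ^ j) := by ring
  _ ≤ (N * r ^ 2) * r ^ j := hkey2
  _ = N * r ^ (j + 2) := by rw [pow_add]; ring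

/-- A smooth function on the upper half-plane which is invariant under a
cocompact subgroup of `SL(2,ℝ)` has all its derivatives bounded with respect to the
hyperbolic metric. -/
theorem invariant_function_has_bounded_derivatives
    (Γ : Subgroup (Matrix.SpecialLinearGroup (Fin 2) ℝ))
    (hcocompact : ∃ F : Set ℂ, F ⊆ UpperHalf ∧ IsCompact F ∧
      ∀ z ∈ UpperHalf, ∃ g ∈ Γ, ∃ w ∈ F, moebius g w = z)
    (u : ℂ → ℝ) (hu : ContDiffOn ℝ (⊤ : ℕ∞) u UpperHalf)
    (hinv : ∀ g ∈ Γ, ∀ z ∈ UpperHalf, u (moebius g z) = u z) :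
    ∀ p, 1 ≤ p → ∃ Mp : ℝ, 0 < Mp ∧ DerivBound u p Mp := by
  obtain ⟨F, hFH, hFc, hcov⟩ := hcocompact
  intro p hp
  -- bounds for the derivatives of u on the compact set F
  have hDcont : ∀ i : ℕ, ContinuousOn (iteratedFDerivWithin ℝ i u UpperHalf) F :=
    fun i => (hu.continuousOn_iteratedFDerivWithin (m := i) (by exact_mod_cast le_top)
      uhp_udR).mono hFH
  choose Cs hCs using fun i : ℕ => hFc.exists_bound_of_continuousOn (hDcont i)
  have hrange : (Finset.range (p + 1)).Nonempty := Finset.nonempty_range_iff.2 (by omega)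
  set C : ℝ := (Finset.range (p + 1)).sup' hrange Cs with hCdef
  have hCle : ∀ i ≤ p, Cs i ≤ C := fun i hi =>
    Finset.le_sup' Cs (Finset.mem_range.2 (by omega))
  -- bound for the imaginary part on F
  obtain ⟨T, hT⟩ := hFc.exists_bound_of_continuousOn Complex.continuous_im.continuousOn
  set B : ℝ := max 1 ((Nat.factorial p : ℝ) * T) with hBdef
  have hB1 : (1 : ℝ) ≤ B := le_max_left _ _
  refine ⟨max 1 ((Nat.factorial p : ℝ) * C * B ^ p), lt_of_lt_of_le one_pos (le_max_left _ _), ?_⟩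
  intro z hz
  obtain ⟨g, hg, w, hwF, hgw⟩ := hcov z hz
  have hwH : w ∈ UpperHalf := hFH hwF
  set Z : UpperHalfPlane := ⟨z, hz⟩ with hZdef
  set W : UpperHalfPlane := ⟨w, hwH⟩ with hWdef
  have hZW : g • W = Z := by
    apply UpperHalfPlane.ext
    rw [← moebius_coe]
    exact hgw
  set φ : ℂ → ℂ := moebius g⁻¹ with hφdef
  have hφz : φ z = w := by
    have h1 : φ z = ((g⁻¹ • Z : UpperHalfPlane) : ℂ) := moebius_coe g⁻¹ Z
    rw [h1, ← hZW, inv_smul_smul]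
  have hmaps : MapsTo φ UpperHalf UpperHalf := fun y hy => moebius_mem g⁻¹ hy
  have hEq : EqOn u (u ∘ φ) UpperHalf := fun y hy =>
    (hinv g⁻¹ (inv_mem hg) y hy).symm
  rw [iteratedFDerivWithin_congr hEq hz p]
  have hφC : ContDiffOn ℝ (⊤ : ℕ∞) φ UpperHalf := (moebius_contDiffOn g⁻¹).restrict_scalars ℝ
  have hwim : 0 < w.im := hwH
  have hC : ∀ i ≤ p, ‖iteratedFDerivWithin ℝ i u UpperHalf (φ z)‖ ≤ C := by
    intro i hi
    rw [hφz]
    exact (hCs i w hwF).trans (hCle i hi)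
  have hD : ∀ i : ℕ, 1 ≤ i → i ≤ p →
      ‖iteratedFDerivWithin ℝ i φ UpperHalf z‖ ≤ (B / z.im) ^ i := by
    intro i h1 h2
    refine (moebius_deriv_bound g⁻¹ hz i h1).trans ?_
    rw [div_pow]
    have hφzim : (φ z).im = w.im := by rw [hφz]
    have hnum : (Nat.factorial i : ℝ) * (moebius g⁻¹ z).im ≤ B ^ i := by
      have e1 : (moebius g⁻¹ z).im = w.im := hφzim
      have h3 : w.im ≤ T := (le_abs_self _).trans (by simpa using hT w hwF)
      have h4 : (Nat.factorial i : ℝ) * (moebius g⁻¹ z).im ≤ (Nat.factorial p : ℝ) * T := by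
        rw [e1]
        exact mul_le_mul (by exact_mod_cast Nat.factorial_le h2) h3 hwim.le (by positivity)
      have h5 : (Nat.factorial p : ℝ) * T ≤ B := le_max_right _ _
      exact h4.trans (h5.trans (le_self_pow₀ hB1 (by omega)))
    have hzim : (0 : ℝ) < z.im := hz
    rw [div_le_div_iff₀ (by positivity) (by positivity)]
    calc (Nat.factorial i : ℝ) * (moebius g⁻¹ z).im * z.im ^ i
        ≤ B ^ i * z.im ^ i := by
          exact mul_le_mul_of_nonneg_right hnum (by positivity)
    _ = B ^ i * z.im ^ i := rfl
  have hbound := norm_iteratedFDerivWithin_comp_le (𝕜 := ℝ) (n := p)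
    hu hφC (by exact_mod_cast le_top) uhp_udR uhp_udR hmaps hz hC hD
  have hzim : (0 : ℝ) < z.im := hz
  calc z.im ^ p * ‖iteratedFDerivWithin ℝ p (u ∘ φ) UpperHalf z‖
      ≤ z.im ^ p * ((Nat.factorial p : ℝ) * C * (B / z.im) ^ p) :=
        mul_le_mul_of_nonneg_left hbound (by positivity)
  _ = (Nat.factorial p : ℝ) * C * B ^ p := by
      rw [div_pow]
      field_simp
  _ ≤ max 1 ((Nat.factorial p : ℝ) * C * B ^ p) := le_max_right _ _


end
end
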